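/- arXiv:1412.3491 — 2 statements merged into one kernel-verified Lean document; each statement's English description precedes it below -/
import Mathlib

section
/- The metric space (ℳ_{[0,1]}, d_L) of isometry classes of compact metric spaces at finite Lipschitz distance from the closed unit interval [0,1] is not separable. -/
open ENNReal

/-- The dilation (smallest Lipschitz constant) of a map between metric spaces. -/
noncomputable def dil {X : Type*} {Y : Type*} [MetricSpace X] [MetricSpace Y]
    (f : X → Y) : ℝ :=
  sInf {K : ℝ | ∀ x y : X, dist (f x) (f y) ≤ K * dist x y}

/-- A bijection is a bi-Lipschitz homeomorphism if it and its inverse are Lipschitz. -/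
def IsBiLipschitzEquiv {X : Type*} {Y : Type*} [MetricSpace X] [MetricSpace Y]
    (f : X ≃ Y) : Prop :=
  (∃ K : NNReal, LipschitzWith K f) ∧ (∃ K : NNReal, LipschitzWith K f.symm)

/-- The quantity `|log dil f| + |log dil f⁻¹|`. -/
noncomputable def lipCost {X : Type*} {Y : Type*} [MetricSpace X] [MetricSpace Y]
    (f : X ≃ Y) : ℝ :=
  |Real.log (dil (f : X → Y))| + |Real.log (dil (f.symm : Y → X))|

/-- The Lipschitz distance: the infimum of `|log dil f| + |log dil f⁻¹|` over all
bi-Lipschitz homeomorphisms `f : X → Y` (`∞` if none exists). -/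
noncomputable def lipDist (X : Type*) (Y : Type*) [MetricSpace X] [MetricSpace Y] : ℝ≥0∞ :=
  ⨅ (f : X ≃ Y) (_ : IsBiLipschitzEquiv f), ENNReal.ofReal (lipCost f)

/-- A bundled compact metric space. -/
structure CptMet where
  carrier : Type
  [inst : MetricSpace carrier]
  [cpt : CompactSpace carrier]

attribute [instance] CptMet.inst CptMet.cpt
namespace MINS
open Real

/-! ### clamp -/

noncomputable def cl (u : ℝ) : ℝ := max 0 (min 1 u)

lemma cl_nonneg (u : ℝ) : 0 ≤ cl u := le_max_left _ _
lemma cl_le_one (u : ℝ) : cl u ≤ 1 := max_le zero_le_one (min_le_left _ _)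
lemma cl_eq_self {u : ℝ} (h0 : 0 ≤ u) (h1 : u ≤ 1) : cl u = u := by
  unfold cl; rw [min_eq_right h1, max_eq_right h0]
lemma cl_eq_zero {u : ℝ} (h : u ≤ 0) : cl u = 0 := by
  unfold cl; rw [max_eq_left]; exact (min_le_right _ _).trans h
lemma cl_eq_one {u : ℝ} (h : 1 ≤ u) : cl u = 1 := by
  unfold cl; rw [min_eq_left h]; exact max_eq_right zero_le_one
lemma cl_mono {u w : ℝ} (h : u ≤ w) : cl u ≤ cl w :=
  max_le_max le_rfl (min_le_min le_rfl h)
lemma cl_lip {u w : ℝ} (h : u ≤ w) : cl w - cl u ≤ w - u := by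
  unfold cl
  rcases le_total 1 u with h1 | h1 <;> rcases le_total 1 w with h2 | h2 <;>
    rcases le_total u 0 with h3 | h3 <;> rcases le_total w 0 with h4 | h4 <;>
    simp [min_eq_left, min_eq_right, max_eq_left, max_eq_right, *] <;> linarith

/-! ### the bump profile -/

noncomputable def phi (u : ℝ) : ℝ := (1 - Real.cos (2 * π * cl u)) / π
noncomputable def psi (u : ℝ) : ℝ := 2 * Real.sin (2 * π * cl u)

lemma phi_nonneg (u : ℝ) : 0 ≤ phi u :=
  div_nonneg (by nlinarith [Real.cos_le_one (2 * π * cl u)]) pi_pos.le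

lemma phi_le_one (u : ℝ) : phi u ≤ 1 := by
  rw [phi, div_le_one pi_pos]
  nlinarith [Real.neg_one_le_cos (2 * π * cl u), Real.pi_gt_three]

lemma phi_zero_of_nonpos {u : ℝ} (h : u ≤ 0) : phi u = 0 := by
  simp [phi, cl_eq_zero h]

lemma phi_zero_of_one_le {u : ℝ} (h : 1 ≤ u) : phi u = 0 := by
  simp [phi, cl_eq_one h, Real.cos_two_pi]

lemma mem_of_phi_ne_zero {u : ℝ} (h : phi u ≠ 0) : 0 < u ∧ u < 1 := by
  constructor
  · by_contra hc; exact h (phi_zero_of_nonpos (not_lt.mp hc))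
  · by_contra hc; exact h (phi_zero_of_one_le (not_lt.mp hc))

lemma abs_sin_le_abs' (x : ℝ) : |Real.sin x| ≤ |x| := Real.abs_sin_le_abs

lemma cos_lip (x y : ℝ) : |Real.cos x - Real.cos y| ≤ |x - y| := by
  rw [Real.cos_sub_cos]
  have h1 := abs_sin_le_abs' ((x - y) / 2)
  have h2 := Real.abs_sin_le_one ((x + y) / 2)
  rw [abs_mul, abs_mul]
  have h3 : |(x - y) / 2| = |x - y| / 2 := by rw [abs_div]; norm_num
  rw [h3] at h1
  have habs : |(-2 : ℝ)| = 2 := by norm_num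
  rw [habs]
  nlinarith [abs_nonneg (Real.sin ((x + y) / 2)), abs_nonneg (Real.sin ((x - y) / 2)),
    abs_nonneg (x - y), mul_le_mul h2 h1 (abs_nonneg _) zero_le_one]

lemma sin_lip (x y : ℝ) : |Real.sin x - Real.sin y| ≤ |x - y| := by
  rw [Real.sin_sub_sin]
  have h1 := abs_sin_le_abs' ((x - y) / 2)
  have h2 := Real.abs_cos_le_one ((x + y) / 2)
  rw [abs_mul, abs_mul]
  have h3 : |(x - y) / 2| = |x - y| / 2 := by rw [abs_div]; norm_num
  rw [h3] at h1
  have habs : |(2 : ℝ)| = 2 := by norm_num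
  rw [habs]
  nlinarith [abs_nonneg (Real.cos ((x + y) / 2)), abs_nonneg (Real.sin ((x - y) / 2)),
    abs_nonneg (x - y), mul_le_mul h1 h2 (abs_nonneg _) (by positivity)]

lemma abs_cl_sub_cl {u w : ℝ} : |cl u - cl w| ≤ |u - w| := by
  rcases le_total u w with h | h
  · rw [abs_sub_comm, abs_of_nonneg (by linarith [cl_mono h]), abs_sub_comm,
      abs_of_nonneg (by linarith)]
    exact cl_lip h
  · rw [abs_of_nonneg (by linarith [cl_mono h]), abs_of_nonneg (by linarith)]
    exact cl_lip h

lemma phi_lip (u w : ℝ) : |phi u - phi w| ≤ 2 * |u - w| := by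
  have h : phi u - phi w = (Real.cos (2 * π * cl w) - Real.cos (2 * π * cl u)) / π := by
    rw [phi, phi]; ring
  rw [h, abs_div, abs_of_pos pi_pos, div_le_iff₀ pi_pos]
  calc |Real.cos (2 * π * cl w) - Real.cos (2 * π * cl u)| ≤ |2 * π * cl w - 2 * π * cl u| :=
        cos_lip _ _
    _ = 2 * π * |cl w - cl u| := by
        rw [show 2 * π * cl w - 2 * π * cl u = 2 * π * (cl w - cl u) by ring, abs_mul,
          abs_of_pos (by positivity)]
    _ ≤ 2 * π * |u - w| := by
        have := abs_cl_sub_cl (u := w) (w := u)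
        rw [abs_sub_comm u w]; nlinarith [pi_pos]
    _ = 2 * |u - w| * π := by ring

lemma psi_lip (u w : ℝ) : |psi u - psi w| ≤ 13 * |u - w| := by
  have h : psi u - psi w = 2 * (Real.sin (2 * π * cl u) - Real.sin (2 * π * cl w)) := by
    rw [psi, psi]; ring
  rw [h, abs_mul, abs_of_pos (by norm_num : (0:ℝ) < 2)]
  calc 2 * |Real.sin (2 * π * cl u) - Real.sin (2 * π * cl w)|
      ≤ 2 * |2 * π * cl u - 2 * π * cl w| := by nlinarith [sin_lip (2 * π * cl u) (2 * π * cl w)]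
    _ = 4 * π * |cl u - cl w| := by
        rw [show 2 * π * cl u - 2 * π * cl w = 2 * π * (cl u - cl w) by ring, abs_mul,
          abs_of_pos (by positivity)]; ring
    _ ≤ 13 * |u - w| := by
        nlinarith [abs_cl_sub_cl (u := u) (w := w), Real.pi_lt_d2, pi_pos,
          abs_nonneg (cl u - cl w), abs_nonneg (u - w)]

/-- MVT-type estimate: `|cos y - cos x + sin x * (y - x)| ≤ (y - x)^2`. -/
lemma qcore (x y : ℝ) : |Real.cos y - Real.cos x + Real.sin x * (y - x)| ≤ (y - x) ^ 2 := by
  set s : Set ℝ := Set.Icc (min x y) (max x y) with hs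
  have hd : ∀ t ∈ s, HasDerivWithinAt (fun t => Real.cos t + Real.sin x * t)
      (-Real.sin t + Real.sin x) s t := by
    intro t _
    have h1 : HasDerivAt (fun t : ℝ => Real.cos t + Real.sin x * t)
        (-Real.sin t + Real.sin x * 1) t :=
      (Real.hasDerivAt_cos t).add ((hasDerivAt_id t).const_mul (Real.sin x))
    simpa using h1.hasDerivWithinAt
  have hb : ∀ t ∈ s, ‖-Real.sin t + Real.sin x‖ ≤ |y - x| := by
    intro t ht
    have h1 : |Real.sin x - Real.sin t| ≤ |x - t| := sin_lip x t
    have h2 : |x - t| ≤ |y - x| := by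
      rcases ht with ⟨hl, hr⟩
      rcases le_total x y with h | h
      · rw [min_eq_left h] at hl; rw [max_eq_right h] at hr
        rw [abs_of_nonpos (by linarith), abs_of_nonneg (by linarith)]; linarith
      · rw [min_eq_right h] at hl; rw [max_eq_left h] at hr
        rw [abs_of_nonneg (by linarith), abs_of_nonpos (by linarith)]; linarith
    rw [Real.norm_eq_abs, show -Real.sin t + Real.sin x = Real.sin x - Real.sin t by ring]
    exact h1.trans h2
  have key := Convex.norm_image_sub_le_of_norm_hasDerivWithin_le hd hb (convex_Icc _ _)
    (Set.mem_Icc.mpr ⟨min_le_left _ _, le_max_left _ _⟩)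
    (Set.mem_Icc.mpr ⟨min_le_right _ _, le_max_right _ _⟩)
  rw [Real.norm_eq_abs, Real.norm_eq_abs] at key
  have heq : Real.cos y + Real.sin x * y - (Real.cos x + Real.sin x * x)
      = Real.cos y - Real.cos x + Real.sin x * (y - x) := by ring
  simp only [heq] at key
  calc |Real.cos y - Real.cos x + Real.sin x * (y - x)| ≤ |y - x| * |y - x| := key
    _ = (y - x) ^ 2 := by rw [← abs_mul, ← sq, abs_sq]

end MINS
namespace MINS
open Real

/-- First-order Taylor estimate for `phi` with slope function `psi`. -/
lemma Qbound {u w : ℝ} (huw : u ≤ w) :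
    |phi w - phi u - psi u * (w - u)| ≤ 26 * (w - u) ^ 2 := by
  set A := cl u with hA
  set B := cl w with hB
  have hAB : A ≤ B := cl_mono huw
  have hABl : B - A ≤ w - u := cl_lip huw
  have hA0 : 0 ≤ A := cl_nonneg u
  have hB1 : B ≤ 1 := cl_le_one w
  -- main split
  have split : phi w - phi u - psi u * (w - u)
      = -((Real.cos (2 * π * B) - Real.cos (2 * π * A)
            + Real.sin (2 * π * A) * (2 * π * B - 2 * π * A)) / π)
        + 2 * Real.sin (2 * π * A) * ((B - A) - (w - u)) := by
    rw [phi, phi, psi]; field_simp; ring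
  have t1 : |(Real.cos (2 * π * B) - Real.cos (2 * π * A)
      + Real.sin (2 * π * A) * (2 * π * B - 2 * π * A)) / π| ≤ 4 * π * (B - A) ^ 2 := by
    rw [abs_div, abs_of_pos pi_pos, div_le_iff₀ pi_pos]
    calc |Real.cos (2 * π * B) - Real.cos (2 * π * A)
        + Real.sin (2 * π * A) * (2 * π * B - 2 * π * A)| ≤ (2 * π * B - 2 * π * A) ^ 2 :=
          qcore (2 * π * A) (2 * π * B)
      _ = 4 * π * (B - A) ^ 2 * π := by ring
  have t2 : |2 * Real.sin (2 * π * A) * ((B - A) - (w - u))| ≤ 4 * π * (w - u) ^ 2 := by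
    rcases le_or_gt u 0 with hu | hu
    · rw [hA, cl_eq_zero hu]; simp
      positivity
    rcases le_or_gt 1 u with hu1 | hu1
    · rw [hA, cl_eq_one hu1]
      rw [show 2 * π * (1:ℝ) = 2 * π by ring, Real.sin_two_pi]
      simp; positivity
    -- now 0 < u < 1, so A = u
    have hAu : A = u := cl_eq_self hu.le hu1.le
    rcases le_or_gt w 1 with hw1 | hw1
    · have hBw : B = w := cl_eq_self (hu.le.trans huw) hw1
      rw [hAu, hBw]; simp; positivity
    · have hBw : B = 1 := cl_eq_one hw1.le
      have hsin : |Real.sin (2 * π * A)| ≤ 2 * π * (1 - A) := by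
        have : Real.sin (2 * π * A) = Real.sin (2 * π * A - 2 * π) := (Real.sin_sub_two_pi _).symm
        rw [this]
        calc |Real.sin (2 * π * A - 2 * π)| ≤ |2 * π * A - 2 * π| := abs_sin_le_abs' _
          _ = 2 * π * (1 - A) := by
              rw [abs_of_nonpos (by nlinarith [pi_pos, hAu ▸ hu1.le])]; ring
      rw [abs_mul, abs_mul]
      have habs2 : |(2:ℝ)| = 2 := by norm_num
      rw [habs2]
      have hd : |(B - A) - (w - u)| = (w - u) - (B - A) := by
        rw [abs_of_nonpos (by linarith)]; ring
      rw [hd]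
      have h1 : (w - u) - (B - A) ≤ w - u := by
        have : 0 ≤ B - A := by linarith
        linarith
      have h2 : 1 - A ≤ w - u := by rw [hAu, ← hBw]; linarith
      have h3 : 0 ≤ (w - u) - (B - A) := by linarith
      have hnn : (0:ℝ) ≤ 2 * π * (1 - A) := by nlinarith [pi_pos]
      have e1 : |Real.sin (2 * π * A)| * ((w - u) - (B - A)) ≤ (2 * π * (1 - A)) * (w - u) :=
        mul_le_mul hsin h1 h3 hnn
      nlinarith [pi_pos, abs_nonneg (Real.sin (2 * π * A)), mul_le_mul_of_nonneg_left h2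
        (by nlinarith [pi_pos] : (0:ℝ) ≤ 2 * π * (w - u))]
  calc |phi w - phi u - psi u * (w - u)| ≤
      |(Real.cos (2 * π * B) - Real.cos (2 * π * A)
          + Real.sin (2 * π * A) * (2 * π * B - 2 * π * A)) / π|
        + |2 * Real.sin (2 * π * A) * ((B - A) - (w - u))| := by
        rw [split]; exact (abs_add_le _ _).trans (by rw [abs_neg])
    _ ≤ 4 * π * (B - A) ^ 2 + 4 * π * (w - u) ^ 2 := add_le_add t1 t2
    _ ≤ 26 * (w - u) ^ 2 := by
        have h1 : (B - A) ^ 2 ≤ (w - u) ^ 2 := by nlinarith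
        nlinarith [Real.pi_lt_d2, pi_pos, sq_nonneg (w - u)]

lemma phi_mono {u w : ℝ} (h0 : 0 ≤ u) (huw : u ≤ w) (hw : w ≤ 1 / 2) : phi u ≤ phi w := by
  have hu1 : u ≤ 1 := by linarith
  have hw1 : w ≤ 1 := by linarith
  rw [phi, phi, cl_eq_self h0 hu1, cl_eq_self (h0.trans huw) hw1,
    div_le_div_iff₀ pi_pos pi_pos]
  have hc : Real.cos (2 * π * w) ≤ Real.cos (2 * π * u) :=
    Real.cos_le_cos_of_nonneg_of_le_pi (by positivity) (by nlinarith [pi_pos])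
      (by nlinarith [pi_pos])
  nlinarith [pi_pos]

lemma phi_anti {u w : ℝ} (h0 : 1 / 2 ≤ u) (huw : u ≤ w) (hw : w ≤ 1) : phi w ≤ phi u := by
  have hu0 : 0 ≤ u := by linarith
  have hu1 : u ≤ 1 := by linarith
  rw [phi, phi, cl_eq_self hu0 hu1, cl_eq_self (hu0.trans huw) hw,
    div_le_div_iff₀ pi_pos pi_pos]
  have e1 : Real.cos (2 * π * u) = Real.cos (2 * π - 2 * π * u) := (Real.cos_two_pi_sub _).symm
  have e2 : Real.cos (2 * π * w) = Real.cos (2 * π - 2 * π * w) := (Real.cos_two_pi_sub _).symm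
  have hc : Real.cos (2 * π - 2 * π * u) ≤ Real.cos (2 * π - 2 * π * w) :=
    Real.cos_le_cos_of_nonneg_of_le_pi (by nlinarith [pi_pos]) (by nlinarith [pi_pos])
      (by nlinarith [pi_pos])
  nlinarith [pi_pos, e1 ▸ e2 ▸ hc]

lemma phi_half : phi (1 / 2) = 2 / π := by
  rw [phi, cl_eq_self (by norm_num) (by norm_num),
    show 2 * π * (1 / 2 : ℝ) = π by ring, Real.cos_pi]
  norm_num

lemma phi_eighth : phi (1 / 8) = (1 - Real.sqrt 2 / 2) / π := by
  rw [phi, cl_eq_self (by norm_num) (by norm_num),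
    show 2 * π * (1 / 8 : ℝ) = π / 4 by ring, Real.cos_pi_div_four]

lemma phi_seven_eighth : phi (7 / 8) = (1 - Real.sqrt 2 / 2) / π := by
  rw [phi, cl_eq_self (by norm_num) (by norm_num),
    show 2 * π * (7 / 8 : ℝ) = 2 * π - π / 4 by ring, Real.cos_two_pi_sub,
    Real.cos_pi_div_four]

end MINS
namespace MINS
open Real

/-! ### The scales and bump functions -/

noncomputable def sc (n : ℕ) : ℝ := (1 / 100 : ℝ) ^ (n + 1)

lemma sc_pos (n : ℕ) : 0 < sc n := by rw [sc]; positivity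

lemma sc_le (n : ℕ) : sc n ≤ 1 / 100 := by
  rw [sc]
  calc ((1:ℝ) / 100) ^ (n + 1) ≤ (1 / 100 : ℝ) ^ 1 :=
        pow_le_pow_of_le_one (by norm_num) (by norm_num) (by omega)
    _ = 1 / 100 := pow_one _

lemma sc_ratio {m j : ℕ} (h : m < j) : 100 * sc j ≤ sc m := by
  have : (100:ℝ) * (1 / 100 : ℝ) ^ (j + 1) = (1 / 100 : ℝ) ^ j := by
    rw [pow_succ]; ring
  rw [sc, sc, this]
  exact pow_le_pow_of_le_one (by norm_num) (by norm_num) (by omega)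

/-- The bump at scale `n`, supported in `[sc n, 2 * sc n]`. -/
noncomputable def T (n : ℕ) (x : ℝ) : ℝ := sc n * phi ((x - sc n) / sc n)

lemma T_nonneg (n : ℕ) (x : ℝ) : 0 ≤ T n x :=
  mul_nonneg (sc_pos n).le (phi_nonneg _)

lemma T_le (n : ℕ) (x : ℝ) : T n x ≤ sc n := by
  rw [T]
  have := phi_le_one ((x - sc n) / sc n)
  nlinarith [sc_pos n]

lemma T_zero_of_not_mem {n : ℕ} {x : ℝ} (h : x ∉ Set.Ioo (sc n) (2 * sc n)) : T n x = 0 := by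
  rw [Set.mem_Ioo, not_and_or] at h
  rcases h with h | h
  · push_neg at h
    rw [T, phi_zero_of_nonpos (by
      apply div_nonpos_of_nonpos_of_nonneg <;> [linarith; exact (sc_pos n).le]), mul_zero]
  · push_neg at h
    rw [T, phi_zero_of_one_le (by
      rw [le_div_iff₀ (sc_pos n)]; linarith), mul_zero]

lemma mem_of_T_ne_zero {n : ℕ} {x : ℝ} (h : T n x ≠ 0) : x ∈ Set.Ioo (sc n) (2 * sc n) := by
  by_contra hc; exact h (T_zero_of_not_mem hc)

open scoped Classical in
/-- The sum of bumps selected by `s`. -/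
noncomputable def G (s : ℕ → Prop) (x : ℝ) : ℝ := ∑' n, if s n then T n x else 0

lemma G_nonneg (s : ℕ → Prop) (x : ℝ) : 0 ≤ G s x :=
  tsum_nonneg fun n => by classical exact (by split <;> [exact T_nonneg n x; rfl] :
    (0:ℝ) ≤ if s n then T n x else 0)

/-- supports of distinct bumps are far apart (relative to the smaller scale) -/
lemma disj {m j : ℕ} (hmj : j ≠ m) {p : ℝ} (h1 : sc m - sc m / 100 ≤ p)
    (h2 : p ≤ 2 * sc m + sc m / 100) : p ∉ Set.Ioo (sc j) (2 * sc j) := by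
  intro hp
  rcases lt_or_gt_of_ne hmj with h | h
  -- j < m : sc j ≥ 100 sc m, and p ≤ 2.01 sc m < sc j
  · have := sc_ratio h
    have := sc_pos m
    have := hp.1
    nlinarith
  -- j > m : 2 sc j ≤ sc m /50 < p
  · have := sc_ratio h
    have := sc_pos j
    have := hp.2
    nlinarith

lemma G_eval {s : ℕ → Prop} {m : ℕ} (hm : s m) {y : ℝ} (hy : y ∈ Set.Ioo (sc m) (2 * sc m))
    {p : ℝ} (hp : |p - y| ≤ sc m / 100) : G s p = T m p := by
  classical
  rw [abs_le] at hp
  have hr1 : sc m - sc m / 100 ≤ p := by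
    have := hy.1; linarith [hp.1]
  have hr2 : p ≤ 2 * sc m + sc m / 100 := by
    have := hy.2; linarith [hp.2]
  have key : ∀ j, j ≠ m → (if s j then T j p else 0) = 0 := by
    intro j hj
    split
    · exact T_zero_of_not_mem (disj hj hr1 hr2)
    · rfl
  rw [G, tsum_eq_single m key, if_pos hm]

lemma G_supp {s : ℕ → Prop} {x v : ℝ} (hv : 0 < v) (h : v ≤ G s x) :
    ∃ m, s m ∧ x ∈ Set.Ioo (sc m) (2 * sc m) ∧ G s x = T m x := by
  classical
  have hex : ∃ m, (if s m then T m x else 0) ≠ 0 := by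
    by_contra hc
    push_neg at hc
    have : G s x = 0 := by
      rw [G]; exact (tsum_congr hc).trans tsum_zero
    linarith
  obtain ⟨m, hm⟩ := hex
  have hsm : s m := by by_contra hc; exact hm (if_neg hc)
  rw [if_pos hsm] at hm
  have hmem := mem_of_T_ne_zero hm
  exact ⟨m, hsm, hmem, G_eval hsm hmem (by rw [sub_self, abs_zero]; linarith [sc_pos m])⟩

lemma T_lip (m : ℕ) (p q : ℝ) : |T m p - T m q| ≤ 2 * |p - q| := by
  have hne : sc m ≠ 0 := (sc_pos m).ne'
  rw [T, T, ← mul_sub, abs_mul, abs_of_pos (sc_pos m)]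
  have h1 : |phi ((p - sc m) / sc m) - phi ((q - sc m) / sc m)|
      ≤ 2 * |(p - sc m) / sc m - (q - sc m) / sc m| := phi_lip _ _
  have h2 : (p - sc m) / sc m - (q - sc m) / sc m = (p - q) / sc m := by ring
  rw [h2, abs_div, abs_of_pos (sc_pos m)] at h1
  calc sc m * |phi ((p - sc m) / sc m) - phi ((q - sc m) / sc m)|
      ≤ sc m * (2 * (|p - q| / sc m)) := mul_le_mul_of_nonneg_left h1 (sc_pos m).le
    _ = 2 * |p - q| := by field_simp

lemma T_bound_left (m : ℕ) (p : ℝ) : T m p ≤ 2 * |p - sc m| := by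
  have h := T_lip m p (sc m)
  have h0 : T m (sc m) = 0 := T_zero_of_not_mem (by
    intro hc; exact absurd hc.1 (lt_irrefl _))
  rw [h0, sub_zero] at h
  exact (le_abs_self _).trans h

lemma T_bound_right (m : ℕ) (p : ℝ) : T m p ≤ 2 * |p - 2 * sc m| := by
  have h := T_lip m p (2 * sc m)
  have h0 : T m (2 * sc m) = 0 := T_zero_of_not_mem (by
    intro hc; exact absurd hc.2 (lt_irrefl _))
  rw [h0, sub_zero] at h
  exact (le_abs_self _).trans h

lemma G_lip (s : ℕ → Prop) {p q : ℝ} (hpq : p ≤ q) : |G s p - G s q| ≤ 2 * (q - p) := by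
  classical
  have absmax : ∀ A B : ℝ, 0 ≤ A → 0 ≤ B → |A - B| ≤ max A B := by
    intro A B hA hB
    rcases le_total A B with h | h
    · rw [abs_of_nonpos (by linarith)]
      exact le_trans (by linarith) (le_max_right A B)
    · rw [abs_of_nonneg (by linarith)]
      exact le_trans (by linarith) (le_max_left A B)
  rcases eq_or_lt_of_le (G_nonneg s p) with hp0 | hp0 <;>
    rcases eq_or_lt_of_le (G_nonneg s q) with hq0 | hq0
  · rw [← hp0, ← hq0]; simp; linarith
  -- G p = 0, G q > 0
  · obtain ⟨m, hsm, hmem, heq⟩ := G_supp hq0 le_rfl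
    rcases le_or_gt p (sc m) with hple | hpgt
    · rw [← hp0, zero_sub, abs_neg, abs_of_nonneg (G_nonneg s q), heq]
      calc T m q ≤ 2 * |q - sc m| := T_bound_left m q
        _ = 2 * (q - sc m) := by rw [abs_of_nonneg (by linarith [hmem.1])]
        _ ≤ 2 * (q - p) := by linarith
    · have hpmem : p ∈ Set.Ioo (sc m) (2 * sc m) := ⟨hpgt, by linarith [hmem.2]⟩
      have heqp : G s p = T m p := G_eval hsm hpmem (by rw [sub_self, abs_zero]; linarith [sc_pos m])
      rw [heqp, heq]
      calc |T m p - T m q| ≤ 2 * |p - q| := T_lip m p q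
        _ = 2 * (q - p) := by rw [abs_sub_comm, abs_of_nonneg (by linarith)]
  -- G p > 0, G q = 0
  · obtain ⟨m, hsm, hmem, heq⟩ := G_supp hp0 le_rfl
    rcases le_or_gt (2 * sc m) q with hqge | hqlt
    · rw [← hq0, sub_zero, abs_of_nonneg (G_nonneg s p), heq]
      calc T m p ≤ 2 * |p - 2 * sc m| := T_bound_right m p
        _ = 2 * (2 * sc m - p) := by
            rw [abs_of_nonpos (by linarith [hmem.2])]; ring
        _ ≤ 2 * (q - p) := by linarith
    · have hqmem : q ∈ Set.Ioo (sc m) (2 * sc m) := ⟨lt_of_lt_of_le hmem.1 hpq, hqlt⟩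
      have heqq : G s q = T m q := G_eval hsm hqmem (by rw [sub_self, abs_zero]; linarith [sc_pos m])
      rw [heqq, heq]
      calc |T m p - T m q| ≤ 2 * |p - q| := T_lip m p q
        _ = 2 * (q - p) := by rw [abs_sub_comm, abs_of_nonneg (by linarith)]
  -- both positive
  · obtain ⟨m, hsm, hmem, heq⟩ := G_supp hp0 le_rfl
    obtain ⟨m', hsm', hmem', heq'⟩ := G_supp hq0 le_rfl
    rcases eq_or_ne m m' with rfl | hne
    · rw [heq, heq']
      calc |T m p - T m q| ≤ 2 * |p - q| := T_lip m p q
        _ = 2 * (q - p) := by rw [abs_sub_comm, abs_of_nonneg (by linarith)]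
    · rcases lt_or_gt_of_ne hne with hlt | hgt
      · exfalso
        have := sc_ratio hlt
        have := sc_pos m'
        have h1 := hmem.1
        have h2 := hmem'.2
        nlinarith
      · have hrat := sc_ratio hgt
        have hkey : 2 * sc m ≤ sc m' := by nlinarith [sc_pos m]
        have hG1 : G s p ≤ 2 * (q - p) := by
          rw [heq]
          calc T m p ≤ 2 * |p - 2 * sc m| := T_bound_right m p
            _ = 2 * (2 * sc m - p) := by rw [abs_of_nonpos (by linarith [hmem.2])]; ring
            _ ≤ 2 * (q - p) := by
                have : 2 * sc m ≤ q := le_trans hkey (le_of_lt hmem'.1)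
                linarith
        have hG2 : G s q ≤ 2 * (q - p) := by
          rw [heq']
          calc T m' q ≤ 2 * |q - sc m'| := T_bound_left m' q
            _ = 2 * (q - sc m') := by rw [abs_of_nonneg (by linarith [hmem'.1])]
            _ ≤ 2 * (q - p) := by
                have : p ≤ sc m' := le_trans (le_of_lt hmem.2) hkey
                linarith
        exact (absmax _ _ (G_nonneg s p) (G_nonneg s q)).trans (max_le hG1 hG2)

end MINS
namespace MINS
open Real

/-- distance function on the deformed interval -/
noncomputable def dd (s : ℕ → Prop) (p q : ℝ) : ℝ := max |p - q| |G s p - G s q|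

lemma dd_comm (s : ℕ → Prop) (p q : ℝ) : dd s p q = dd s q p := by
  rw [dd, dd, abs_sub_comm, abs_sub_comm (G s p)]

lemma dd_self (s : ℕ → Prop) (p : ℝ) : dd s p p = 0 := by simp [dd]

lemma abs_le_dd (s : ℕ → Prop) (p q : ℝ) : |p - q| ≤ dd s p q := le_max_left _ _
lemma absG_le_dd (s : ℕ → Prop) (p q : ℝ) : |G s p - G s q| ≤ dd s p q := le_max_right _ _

lemma dd_nonneg (s : ℕ → Prop) (p q : ℝ) : 0 ≤ dd s p q :=
  le_trans (abs_nonneg _) (abs_le_dd s p q)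

lemma dd_triangle (s : ℕ → Prop) (p q r : ℝ) : dd s p r ≤ dd s p q + dd s q r := by
  rw [dd]
  apply max_le
  · calc |p - r| ≤ |p - q| + |q - r| := abs_sub_le p q r
      _ ≤ dd s p q + dd s q r := add_le_add (abs_le_dd s p q) (abs_le_dd s q r)
  · calc |G s p - G s r| ≤ |G s p - G s q| + |G s q - G s r| := abs_sub_le _ _ _
      _ ≤ dd s p q + dd s q r := add_le_add (absG_le_dd s p q) (absG_le_dd s q r)

lemma dd_le (s : ℕ → Prop) (p q : ℝ) : dd s p q ≤ 2 * |p - q| := by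
  apply max_le
  · linarith [abs_nonneg (p - q)]
  · rcases le_total p q with h | h
    · calc |G s p - G s q| ≤ 2 * (q - p) := G_lip s h
        _ = 2 * |p - q| := by rw [abs_sub_comm, abs_of_nonneg (by linarith)]
    · calc |G s p - G s q| = |G s q - G s p| := abs_sub_comm _ _
        _ ≤ 2 * (p - q) := G_lip s h
        _ = 2 * |p - q| := by rw [abs_of_nonneg (by linarith)]

/-- The deformed interval as a type. -/
structure Pt (s : ℕ → Prop) where
  x : ℝ
  mem : x ∈ Set.Icc (0:ℝ) 1

lemma Pt.ext' {s : ℕ → Prop} {p q : Pt s} (h : p.x = q.x) : p = q := by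
  cases p; cases q; simpa using h

noncomputable instance PtMS (s : ℕ → Prop) : MetricSpace (Pt s) where
  dist p q := dd s p.x q.x
  dist_self p := dd_self s p.x
  dist_comm p q := dd_comm s p.x q.x
  dist_triangle p q r := dd_triangle s p.x q.x r.x
  eq_of_dist_eq_zero := by
    intro p q h
    apply Pt.ext'
    have h1 : |p.x - q.x| ≤ 0 := h ▸ abs_le_dd s p.x q.x
    have := abs_nonneg (p.x - q.x)
    have : |p.x - q.x| = 0 := le_antisymm h1 this
    rw [abs_eq_zero] at this
    linarith

lemma Pt.dist_def {s : ℕ → Prop} (p q : Pt s) : dist p q = dd s p.x q.x := rfl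

/-- transfer map from the standard interval -/
def toPt (s : ℕ → Prop) : ↥(Set.Icc (0:ℝ) 1) ≃ Pt s where
  toFun u := ⟨u.1, u.2⟩
  invFun p := ⟨p.x, p.mem⟩
  left_inv u := rfl
  right_inv p := rfl

lemma toPt_lip (s : ℕ → Prop) : LipschitzWith 2 (toPt s) := by
  apply LipschitzWith.of_dist_le_mul
  intro u v
  rw [Pt.dist_def, Subtype.dist_eq, Real.dist_eq]
  calc dd s u.1 v.1 ≤ 2 * |u.1 - v.1| := dd_le s u.1 v.1
    _ = 2 * |(u:ℝ) - v| := rfl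

lemma toPt_symm_lip (s : ℕ → Prop) : LipschitzWith 1 (toPt s).symm := by
  apply LipschitzWith.of_dist_le_mul
  intro p q
  rw [Subtype.dist_eq, Real.dist_eq]
  simp only [NNReal.coe_one, one_mul]
  exact abs_le_dd s p.x q.x

instance (s : ℕ → Prop) : CompactSpace (Pt s) := by
  have hcont : Continuous (toPt s) := (toPt_lip s).continuous
  constructor
  have : Set.range (toPt s) = Set.univ := Set.range_eq_univ.mpr (toPt s).surjective
  rw [← this]
  exact isCompact_range hcont

instance (s : ℕ → Prop) : Nontrivial (Pt s) := by
  refine ⟨⟨0, by norm_num⟩, ⟨1, by norm_num⟩, ?_⟩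
  intro h
  have : (0 : ℝ) = 1 := congrArg Pt.x h
  norm_num at this

lemma biLip_toPt (s : ℕ → Prop) : IsBiLipschitzEquiv (toPt s) :=
  ⟨⟨2, toPt_lip s⟩, ⟨1, toPt_symm_lip s⟩⟩

end MINS
namespace MINS
open Real
set_option maxHeartbeats 1000000

/-- scaled upper Taylor bound -/
lemma Qs_upper {b c xx yy : ℝ} (hb : 0 < b) (h : xx ≤ yy) :
    b ^ 2 * (phi ((yy - c) / b) - phi ((xx - c) / b))
      ≤ psi ((xx - c) / b) * (yy - xx) * b + 26 * (yy - xx) ^ 2 := by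
  have hbne : b ≠ 0 := hb.ne'
  have huw : (xx - c) / b ≤ (yy - c) / b := by gcongr
  have key := (abs_le.mp (Qbound huw)).2
  have e1 : (yy - c) / b - (xx - c) / b = (yy - xx) / b := by field_simp; ring
  rw [e1] at key
  have key2 := mul_le_mul_of_nonneg_left key (sq_nonneg b)
  have e2 : b ^ 2 * (phi ((yy - c) / b) - phi ((xx - c) / b) - psi ((xx - c) / b) * ((yy - xx) / b))
      = b ^ 2 * (phi ((yy - c) / b) - phi ((xx - c) / b)) - psi ((xx - c) / b) * (yy - xx) * b := by
    field_simp <;> ring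
  have e3 : b ^ 2 * (26 * ((yy - xx) / b) ^ 2) = 26 * (yy - xx) ^ 2 := by
    field_simp <;> ring
  rw [e2, e3] at key2
  linarith

/-- scaled lower Taylor bound -/
lemma Qs_lower {b c xx yy : ℝ} (hb : 0 < b) (h : xx ≤ yy) :
    psi ((xx - c) / b) * (yy - xx) * b - 26 * (yy - xx) ^ 2
      ≤ b ^ 2 * (phi ((yy - c) / b) - phi ((xx - c) / b)) := by
  have hbne : b ≠ 0 := hb.ne'
  have huw : (xx - c) / b ≤ (yy - c) / b := by gcongr
  have key := (abs_le.mp (Qbound huw)).1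
  have e1 : (yy - c) / b - (xx - c) / b = (yy - xx) / b := by field_simp; ring
  rw [e1] at key
  have key2 := mul_le_mul_of_nonneg_left key (sq_nonneg b)
  have e2 : b ^ 2 * (phi ((yy - c) / b) - phi ((xx - c) / b) - psi ((xx - c) / b) * ((yy - xx) / b))
      = b ^ 2 * (phi ((yy - c) / b) - phi ((xx - c) / b)) - psi ((xx - c) / b) * (yy - xx) * b := by
    field_simp <;> ring
  have e3 : b ^ 2 * -(26 * ((yy - xx) / b) ^ 2) = -(26 * (yy - xx) ^ 2) := by
    field_simp <;> ring
  rw [e2, e3] at key2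
  linarith

/-- purely arithmetic contradiction for the Λ-case -/
lemma lamArith (v b P Q sx sy : ℝ) (hv : 0 < v) (hb : 0 < b) (hP : 0 < P) (hQ : 0 < Q)
    (hSv : P + Q ≤ 29 / 20 * v) (hSb : P + Q ≤ 203 / 25000 * b)
    (A1 : v * b ≤ sx * P * b + 26 * P ^ 2)
    (A2 : sy * Q * b ≤ -(v * b) + 26 * Q ^ 2)
    (A3 : sx * P * b ≤ sy * P * b + 13 * P ^ 2) : False := by
  have B1 : v * b ≤ sy * P * b + 39 * P ^ 2 := by linarith
  have B2 := mul_le_mul_of_nonneg_right B1 hQ.le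
  have B3 := mul_le_mul_of_nonneg_right A2 hP.le
  have B4 : v * b * (P + Q) ≤ 39 * P ^ 2 * Q + 26 * Q ^ 2 * P := by nlinarith [B2, B3]
  have B6 : 39 * P ^ 2 * Q + 26 * Q ^ 2 * P ≤ 39 * (P * Q) * (P + Q) := by nlinarith
  have B8 : (P + Q) * (P + Q) ≤ (29 / 20 * v) * (203 / 25000 * b) :=
    mul_le_mul hSv hSb (by linarith) (by positivity)
  have B9 : 4 * (P * Q) ≤ (P + Q) * (P + Q) := by nlinarith [sq_nonneg (P - Q)]
  have C1 : P * Q ≤ (29 / 20 * v) * (203 / 25000 * b) / 4 := by linarith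
  have C2 := mul_le_mul_of_nonneg_right C1 (by linarith : (0:ℝ) ≤ P + Q)
  have final : v * b * (P + Q) ≤ 39 * ((29 / 20 * v) * (203 / 25000 * b) / 4) * (P + Q) := by
    nlinarith [B4, B6, C2]
  nlinarith [final, mul_pos (mul_pos hv hb) (by linarith : (0:ℝ) < P + Q)]

/-- In a "false block" there is no Λ-shaped (rise `v`, fall `v`) configuration at scale `v`. -/
lemma lamCase (t : ℕ → Prop) (k : ℕ) (htk : ¬ t k) (v : ℝ)
    (hv1 : 2 / 5 * sc k ≤ v) (hv2 : v ≤ 14 / 25 * sc k)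
    (x y z : ℝ) (hxy : x < y) (hyz : y < z) (hspan : z - x ≤ 29 / 20 * v)
    (h1 : v ≤ G t y - G t x) (h2 : v ≤ G t y - G t z) : False := by
  have hsk := sc_pos k
  have hv : 0 < v := by nlinarith
  have hGy : v ≤ G t y := le_trans h1 (by linarith [G_nonneg t x])
  obtain ⟨m, htm, hyIoo, heqy⟩ := G_supp hv hGy
  have hsm := sc_pos m
  -- m < k
  have hscm : v ≤ sc m := le_trans hGy (heqy ▸ T_le m y)
  have hmk : m < k := by
    rcases lt_trichotomy m k with h | h | h
    · exact h
    · exact absurd (h ▸ htm) htk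
    · exfalso; have := sc_ratio h; nlinarith
  have hrat : 100 * sc k ≤ sc m := sc_ratio hmk
  -- window bounds
  have hwin : ∀ p : ℝ, |p - y| ≤ z - x → G t p = T m p := by
    intro p hp
    apply G_eval htm hyIoo
    calc |p - y| ≤ z - x := hp
      _ ≤ 29 / 20 * v := hspan
      _ ≤ sc m / 100 := by nlinarith
  have heqx : G t x = T m x := hwin x (by rw [abs_of_nonpos (by linarith)]; linarith)
  have heqz : G t z = T m z := hwin z (by rw [abs_of_nonneg (by linarith)]; linarith)
  -- scaled quantities
  set b := sc m with hbdef
  set P := y - x with hPdef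
  set Q := z - y with hQdef
  have hP : 0 < P := by simp [hPdef]; linarith
  have hQ : 0 < Q := by simp [hQdef]; linarith
  set sx := psi ((x - sc m) / b) with hsxdef
  set sy := psi ((y - sc m) / b) with hsydef
  -- A1 : v * b ≤ sx * P * b + 26 * P^2
  have hTx : G t x = b * phi ((x - sc m) / b) := by rw [heqx, T]
  have hTy : G t y = b * phi ((y - sc m) / b) := by rw [heqy, T]
  have hTz : G t z = b * phi ((z - sc m) / b) := by rw [heqz, T]
  have A1 : v * b ≤ sx * P * b + 26 * P ^ 2 := by
    have q := Qs_upper (c := sc m) (xx := x) (yy := y) hsm hxy.le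
    rw [← hsxdef, ← hPdef] at q
    have h1' : v * b ≤ b ^ 2 * (phi ((y - sc m) / b) - phi ((x - sc m) / b)) := by
      have hd : v ≤ b * phi ((y - sc m) / b) - b * phi ((x - sc m) / b) := by
        rw [← hTy, ← hTx]; exact h1
      have hmul := mul_le_mul_of_nonneg_right hd hsm.le
      have e : b ^ 2 * (phi ((y - sc m) / b) - phi ((x - sc m) / b))
          = (b * phi ((y - sc m) / b) - b * phi ((x - sc m) / b)) * b := by ring
      rw [e]; exact hmul
    exact h1'.trans q
  -- A2 : sy * Q * b ≤ -(v*b) + 26 * Q^2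
  have A2 : sy * Q * b ≤ -(v * b) + 26 * Q ^ 2 := by
    have q := Qs_lower (c := sc m) (xx := y) (yy := z) hsm hyz.le
    rw [← hsydef, ← hQdef] at q
    have h2' : b ^ 2 * (phi ((z - sc m) / b) - phi ((y - sc m) / b)) ≤ -(v * b) := by
      have hd : b * phi ((z - sc m) / b) - b * phi ((y - sc m) / b) ≤ -v := by
        rw [← hTy, ← hTz]; linarith
      have hmul := mul_le_mul_of_nonneg_right hd hsm.le
      have e : b ^ 2 * (phi ((z - sc m) / b) - phi ((y - sc m) / b))
          = (b * phi ((z - sc m) / b) - b * phi ((y - sc m) / b)) * b := by ring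
      rw [e]; linarith [hmul]
    linarith [q.trans h2']
  -- A3 : sx * P * b ≤ sy * P * b + 13 * P^2
  have A3 : sx * P * b ≤ sy * P * b + 13 * P ^ 2 := by
    have hl := psi_lip ((x - sc m) / b) ((y - sc m) / b)
    rw [← hsxdef, ← hsydef] at hl
    have e1 : (x - sc m) / b - (y - sc m) / b = -(P / b) := by
      rw [hPdef]; field_simp; ring
    rw [e1, abs_neg, abs_div, abs_of_pos hsm, abs_of_pos hP] at hl
    have hl2 : sx - sy ≤ 13 * (P / b) := le_trans (le_abs_self _) hl
    have hm2 := mul_le_mul_of_nonneg_right hl2 (by positivity : (0:ℝ) ≤ P * b)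
    have e2 : 13 * (P / b) * (P * b) = 13 * P ^ 2 := by field_simp <;> ring
    rw [e2] at hm2
    nlinarith [hm2]
  -- combine
  have hSv : P + Q ≤ 29 / 20 * v := by
    have he : P + Q = z - x := by rw [hPdef, hQdef]; ring
    rw [he]; exact hspan
  have hSb : P + Q ≤ 203 / 25000 * b := by
    have he : P + Q = z - x := by rw [hPdef, hQdef]; ring
    rw [he]
    nlinarith
  exact lamArith v b P Q sx sy hv hsm hP hQ hSv hSb A1 A2 A3

/-- In a "false block" there is no V-shaped configuration at scale `v`. -/
lemma veeCase (t : ℕ → Prop) (k : ℕ) (htk : ¬ t k) (v : ℝ)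
    (hv1 : 2 / 5 * sc k ≤ v) (hv2 : v ≤ 14 / 25 * sc k)
    (x y z : ℝ) (hxy : x < y) (hyz : y < z) (hspan : z - x ≤ 29 / 20 * v)
    (h1 : v ≤ G t x - G t y) (h2 : v ≤ G t z - G t y) : False := by
  have hsk := sc_pos k
  have hv : 0 < v := by nlinarith
  have hGx : v ≤ G t x := le_trans h1 (by linarith [G_nonneg t y])
  have hGz : v ≤ G t z := le_trans h2 (by linarith [G_nonneg t y])
  obtain ⟨m1, htm1, hxIoo, heqx⟩ := G_supp hv hGx
  obtain ⟨m2, htm2, hzIoo, heqz⟩ := G_supp hv hGz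
  have hsm1 := sc_pos m1
  have hsm2 := sc_pos m2
  have hmk1 : m1 < k := by
    have hscm : v ≤ sc m1 := le_trans hGx (heqx ▸ T_le m1 x)
    rcases lt_trichotomy m1 k with h | h | h
    · exact h
    · exact absurd (h ▸ htm1) htk
    · exfalso; have := sc_ratio h; nlinarith
  have hmk2 : m2 < k := by
    have hscm : v ≤ sc m2 := le_trans hGz (heqz ▸ T_le m2 z)
    rcases lt_trichotomy m2 k with h | h | h
    · exact h
    · exact absurd (h ▸ htm2) htk
    · exfalso; have := sc_ratio h; nlinarith
  have hrat1 : 100 * sc k ≤ sc m1 := sc_ratio hmk1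
  have hrat2 : 100 * sc k ≤ sc m2 := sc_ratio hmk2
  have hm12 : m1 = m2 := by
    by_contra hne
    rcases lt_or_gt_of_ne hne with h | h
    · -- m1 < m2 : sc m1 ≥ 100 sc m2 : z < 2 sc m2 ≤ sc m1 < x, contra x < z
      have := sc_ratio h
      have h1' := hxIoo.1
      have h2' := hzIoo.2
      nlinarith
    · -- m2 < m1 : sc m2 ≥ 100 sc m1 : z - x ≥ sc m2 - 2 sc m1 ≥ 98 sc m1 ≥ big
      have := sc_ratio h
      have h1' := hxIoo.2
      have h2' := hzIoo.1
      nlinarith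
  subst hm12
  -- y is in the same support interval
  have hyIoo : y ∈ Set.Ioo (sc m1) (2 * sc m1) :=
    ⟨lt_trans hxIoo.1 hxy, lt_trans hyz hzIoo.2⟩
  have heqy : G t y = T m1 y := G_eval htm1 hyIoo (by rw [sub_self, abs_zero]; linarith)
  -- unimodality contradiction
  set ux := (x - sc m1) / sc m1 with huxdef
  set uy := (y - sc m1) / sc m1 with huydef
  set uz := (z - sc m1) / sc m1 with huzdef
  have hux0 : 0 ≤ ux := by
    rw [huxdef]
    exact div_nonneg (by linarith [hxIoo.1]) hsm1.le
  have huxy : ux ≤ uy := by rw [huxdef, huydef]; gcongr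
  have huyz : uy ≤ uz := by rw [huydef, huzdef]; gcongr
  have huz1 : uz ≤ 1 := by
    rw [huzdef, div_le_one hsm1]; linarith [hzIoo.2]
  rcases le_total uy (1 / 2) with hh | hh
  · have := phi_mono hux0 huxy hh
    have e1 : G t x = sc m1 * phi ux := by rw [heqx, T]
    have e2 : G t y = sc m1 * phi uy := by rw [heqy, T]
    nlinarith
  · have := phi_anti hh huyz huz1
    have e2 : G t y = sc m1 * phi uy := by rw [heqy, T]
    have e3 : G t z = sc m1 * phi uz := by rw [heqz, T]
    nlinarith

/-- Sorted version of the no-triple lemma. -/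
lemma noTripleSorted (t : ℕ → Prop) (k : ℕ) (htk : ¬ t k) (v : ℝ)
    (hv1 : 2 / 5 * sc k ≤ v) (hv2 : v ≤ 14 / 25 * sc k)
    (x y z : ℝ) (hxy : x < y) (hyz : y < z)
    (h12 : dd t x y ∈ Set.Icc v (29 / 20 * v))
    (h13 : dd t x z ∈ Set.Icc v (29 / 20 * v))
    (h23 : dd t y z ∈ Set.Icc v (29 / 20 * v)) : False := by
  have hsk := sc_pos k
  have hv : 0 < v := by nlinarith
  have hspan : z - x ≤ 29 / 20 * v := by
    have h := (abs_le_dd t x z).trans h13.2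
    rw [abs_of_nonpos (by linarith)] at h
    linarith
  have hGxz : |G t x - G t z| ≤ 29 / 20 * v := (absG_le_dd t x z).trans h13.2
  have hd12 := h12.1
  have hd23 := h23.1
  rw [dd] at hd12 hd23
  rcases le_max_iff.mp hd12 with hA1 | hB1 <;> rcases le_max_iff.mp hd23 with hA2 | hB2
  · -- both horizontal: span too big
    rw [abs_of_nonpos (by linarith)] at hA1
    rw [abs_of_nonpos (by linarith)] at hA2
    linarith
  · -- Δ₁ ≥ v, |δ₂| ≥ v : steep contradiction
    rw [abs_of_nonpos (by linarith)] at hA1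
    have hlip : |G t y - G t z| ≤ 2 * (z - y) := G_lip t hyz.le
    linarith
  · rw [abs_of_nonpos (by linarith)] at hA2
    have hlip : |G t x - G t y| ≤ 2 * (y - x) := G_lip t hxy.le
    linarith
  · -- both vertical
    rcases le_abs.mp hB1 with hB1' | hB1' <;> rcases le_abs.mp hB2 with hB2' | hB2'
    · -- G x - G y ≥ v and G y - G z ≥ v : same sign (both drops): sum ≥ 2v
      have : G t x - G t z ≥ 2 * v := by linarith
      have := le_abs_self (G t x - G t z)
      linarith
    · -- G x - G y ≥ v and G z - G y ≥ v : V shape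
      exact veeCase t k htk v hv1 hv2 x y z hxy hyz hspan (by linarith) (by linarith)
    · -- G y - G x ≥ v and G y - G z ≥ v : Λ shape
      exact lamCase t k htk v hv1 hv2 x y z hxy hyz hspan (by linarith) (by linarith)
    · -- both rises: sum ≥ 2v
      have : G t z - G t x ≥ 2 * v := by linarith
      have := neg_abs_le (G t x - G t z)
      linarith

/-- Main geometric lemma: in a block where `t` has no bump, there is no near-equilateral
triple at the corresponding scale. -/
lemma noTriple (t : ℕ → Prop) (k : ℕ) (htk : ¬ t k) (v : ℝ)
    (hv1 : 2 / 5 * sc k ≤ v) (hv2 : v ≤ 14 / 25 * sc k)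
    (x y z : ℝ)
    (h12 : dd t x y ∈ Set.Icc v (29 / 20 * v))
    (h13 : dd t x z ∈ Set.Icc v (29 / 20 * v))
    (h23 : dd t y z ∈ Set.Icc v (29 / 20 * v)) : False := by
  have hsk := sc_pos k
  have hv : 0 < v := by nlinarith
  have hne : ∀ p q : ℝ, dd t p q ∈ Set.Icc v (29 / 20 * v) → p ≠ q := by
    intro p q h hpq
    rw [hpq, dd_self] at h
    linarith [h.1]
  have h12' := hne x y h12
  have h13' := hne x z h13
  have h23' := hne y z h23
  rcases lt_trichotomy x y with hxy | hxy | hxy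
  · rcases lt_trichotomy y z with hyz | hyz | hyz
    · exact noTripleSorted t k htk v hv1 hv2 x y z hxy hyz h12 h13 h23
    · exact h23' hyz
    · rcases lt_trichotomy x z with hxz | hxz | hxz
      · exact noTripleSorted t k htk v hv1 hv2 x z y hxz hyz
          h13 h12 (by rw [dd_comm]; exact h23)
      · exact h13' hxz
      · exact noTripleSorted t k htk v hv1 hv2 z x y hxz hxy
          (by rw [dd_comm]; exact h13) (by rw [dd_comm]; exact h23) h12
  · exact h12' hxy
  · rcases lt_trichotomy x z with hxz | hxz | hxz
    · exact noTripleSorted t k htk v hv1 hv2 y x z hxy hxz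
        (by rw [dd_comm]; exact h12) h23 h13
    · exact h13' hxz
    · rcases lt_trichotomy y z with hyz | hyz | hyz
      · exact noTripleSorted t k htk v hv1 hv2 y z x hyz hxz
          h23 (by rw [dd_comm]; exact h12) (by rw [dd_comm]; exact h13)
      · exact h23' hyz
      · exact noTripleSorted t k htk v hv1 hv2 z y x hyz hxy
          (by rw [dd_comm]; exact h23) (by rw [dd_comm]; exact h13)
          (by rw [dd_comm]; exact h12)

end MINS
namespace MINS
open Real

lemma dil_bound {X Y : Type*} [MetricSpace X] [MetricSpace Y] [Nontrivial X]
    (f : X ≃ Y) (hK : ∃ K : NNReal, LipschitzWith K f) :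
    ∀ x y : X, dist (f x) (f y) ≤ dil (f : X → Y) * dist x y := by
  obtain ⟨K, hK⟩ := hK
  have hne : Set.Nonempty {K : ℝ | ∀ x y : X, dist (f x) (f y) ≤ K * dist x y} :=
    ⟨K, fun x y => hK.dist_le_mul x y⟩
  obtain ⟨u, w, huw⟩ := exists_pair_ne X
  have hd : 0 < dist u w := dist_pos.mpr huw
  intro x y
  rcases eq_or_ne x y with rfl | hxy
  · simp [dil]
  · have hdxy : 0 < dist x y := dist_pos.mpr hxy
    have hlb : dist (f x) (f y) / dist x y ≤ dil (f : X → Y) := by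
      apply le_csInf hne
      intro K hK'
      rw [div_le_iff₀ hdxy]
      exact hK' x y
    calc dist (f x) (f y) = dist (f x) (f y) / dist x y * dist x y := by field_simp
      _ ≤ dil (f : X → Y) * dist x y := mul_le_mul_of_nonneg_right hlb hdxy.le

lemma dil_pos {X Y : Type*} [MetricSpace X] [MetricSpace Y] [Nontrivial X]
    (f : X ≃ Y) (hK : ∃ K : NNReal, LipschitzWith K f) : 0 < dil (f : X → Y) := by
  obtain ⟨u, w, huw⟩ := exists_pair_ne X
  have h1 := dil_bound f hK u w
  have h2 : 0 < dist (f u) (f w) := dist_pos.mpr fun h => huw (f.injective h)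
  have h3 : 0 < dist u w := dist_pos.mpr huw
  nlinarith

lemma exp_hundredth : Real.exp (1 / 100) ≤ 100 / 99 := by
  have h := Real.add_one_le_exp (-(1 / 100 : ℝ))
  have hpos := Real.exp_pos (1 / 100 : ℝ)
  rw [Real.exp_neg] at h
  have h2 : (99 / 100 : ℝ) ≤ (Real.exp (1 / 100))⁻¹ := by linarith
  have h3 := mul_le_mul_of_nonneg_right h2 hpos.le
  rw [inv_mul_cancel₀ hpos.ne'] at h3
  linarith

lemma dil_le {X Y : Type*} [MetricSpace X] [MetricSpace Y] [Nontrivial X]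
    (f : X ≃ Y) (hK : ∃ K : NNReal, LipschitzWith K f)
    (h : |Real.log (dil (f : X → Y))| < 1 / 100) : dil (f : X → Y) ≤ 100 / 99 := by
  have hp := dil_pos f hK
  have h1 : Real.log (dil (f : X → Y)) < 1 / 100 := lt_of_le_of_lt (le_abs_self _) h
  have h2 := Real.exp_lt_exp.mpr h1
  rw [Real.exp_log hp] at h2
  linarith [exp_hundredth]

lemma extract {X Y : Type*} [MetricSpace X] [MetricSpace Y] [Nontrivial X]
    (h : lipDist X Y < ENNReal.ofReal (1 / 100)) :
    ∃ f : X ≃ Y, (∀ x y : X, dist (f x) (f y) ≤ 100 / 99 * dist x y) ∧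
      (∀ x y : Y, dist (f.symm x) (f.symm y) ≤ 100 / 99 * dist x y) := by
  rw [lipDist] at h
  obtain ⟨f, hf⟩ := iInf_lt_iff.mp h
  obtain ⟨hbi, hcost⟩ := iInf_lt_iff.mp hf
  have hcost' : lipCost f < 1 / 100 :=
    (ENNReal.ofReal_lt_ofReal_iff (by norm_num)).mp hcost
  haveI : Nontrivial Y := by
    obtain ⟨u, w, huw⟩ := exists_pair_ne X
    exact ⟨f u, f w, fun h => huw (f.injective h)⟩
  have hc1 : |Real.log (dil (f : X → Y))| < 1 / 100 := by
    have := abs_nonneg (Real.log (dil (f.symm : Y → X)))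
    rw [lipCost] at hcost'; linarith
  have hc2 : |Real.log (dil (f.symm : Y → X))| < 1 / 100 := by
    have := abs_nonneg (Real.log (dil (f : X → Y)))
    rw [lipCost] at hcost'; linarith
  have hd1 := dil_le f hbi.1 hc1
  have hd2 := dil_le f.symm (by simpa using hbi.2) hc2
  refine ⟨f, fun x y => ?_, fun x y => ?_⟩
  · calc dist (f x) (f y) ≤ dil (f : X → Y) * dist x y := dil_bound f hbi.1 x y
      _ ≤ 100 / 99 * dist x y := mul_le_mul_of_nonneg_right hd1 dist_nonneg
  · calc dist (f.symm x) (f.symm y) ≤ dil (f.symm : Y → X) * dist x y :=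
        dil_bound f.symm (by simpa using hbi.2) x y
      _ ≤ 100 / 99 * dist x y := mul_le_mul_of_nonneg_right hd2 dist_nonneg

lemma lipDist_ne_top' {X Y : Type*} [MetricSpace X] [MetricSpace Y] (f : X ≃ Y)
    (hf : IsBiLipschitzEquiv f) : lipDist X Y ≠ ⊤ := by
  have h : lipDist X Y ≤ ENNReal.ofReal (lipCost f) := by
    rw [lipDist]; exact iInf₂_le f hf
  exact ne_top_of_le_ne_top ENNReal.ofReal_ne_top h

end MINS
namespace MINS
open Real

lemma sqrt2_bounds : 1.41421 ≤ Real.sqrt 2 ∧ Real.sqrt 2 ≤ 1.41422 := by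
  have hs : Real.sqrt 2 ^ 2 = 2 := Real.sq_sqrt (by norm_num)
  have hpos := Real.sqrt_nonneg 2
  constructor <;> nlinarith [hs, hpos]

lemma CC_bounds : (0.5433 : ℝ) ≤ (1 + Real.sqrt 2 / 2) / π ∧
    (1 + Real.sqrt 2 / 2) / π ≤ 0.5434 := by
  obtain ⟨hs1, hs2⟩ := sqrt2_bounds
  have hp1 := Real.pi_gt_d6
  have hp2 := Real.pi_lt_d6
  have hpi := Real.pi_pos
  constructor
  · rw [le_div_iff₀ hpi]; nlinarith
  · rw [div_le_iff₀ hpi]; nlinarith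

lemma G_val (s : ℕ → Prop) {k : ℕ} (hk : s k) (u : ℝ) (hu0 : 0 < u) (hu1 : u < 1) :
    G s (sc k * (1 + u)) = sc k * phi u := by
  have hmem : sc k * (1 + u) ∈ Set.Ioo (sc k) (2 * sc k) := by
    constructor <;> nlinarith [sc_pos k]
  have h := G_eval hk hmem (p := sc k * (1 + u)) (by rw [sub_self, abs_zero]; linarith [sc_pos k])
  rw [h, T]
  congr 1
  rw [show sc k * (1 + u) - sc k = u * sc k by ring, mul_div_assoc,
    div_self (sc_pos k).ne', mul_one]

lemma trip_dists (s : ℕ → Prop) {k : ℕ} (hk : s k) :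
    dd s (sc k * (1 + 1/8)) (sc k * (1 + 1/2)) = sc k * ((1 + Real.sqrt 2 / 2) / π) ∧
    dd s (sc k * (1 + 1/2)) (sc k * (1 + 7/8)) = sc k * ((1 + Real.sqrt 2 / 2) / π) ∧
    dd s (sc k * (1 + 1/8)) (sc k * (1 + 7/8)) = sc k * (3/4) := by
  have hsc := sc_pos k
  have e1 : G s (sc k * (1 + 1/8)) = sc k * ((1 - Real.sqrt 2 / 2) / π) := by
    rw [G_val s hk (1/8) (by norm_num) (by norm_num), phi_eighth]
  have e2 : G s (sc k * (1 + 1/2)) = sc k * (2 / π) := by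
    rw [G_val s hk (1/2) (by norm_num) (by norm_num), phi_half]
  have e3 : G s (sc k * (1 + 7/8)) = sc k * ((1 - Real.sqrt 2 / 2) / π) := by
    rw [G_val s hk (7/8) (by norm_num) (by norm_num), phi_seven_eighth]
  obtain ⟨hs1, hs2⟩ := sqrt2_bounds
  have hp1 := Real.pi_gt_d6
  have hp2 := Real.pi_lt_d6
  have hpi := Real.pi_pos
  have hCpos : (0.5433 : ℝ) ≤ (1 + Real.sqrt 2 / 2) / π := CC_bounds.1
  have hgap : sc k * (2 / π) - sc k * ((1 - Real.sqrt 2 / 2) / π)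
      = sc k * ((1 + Real.sqrt 2 / 2) / π) := by
    field_simp; ring
  refine ⟨?_, ?_, ?_⟩
  · rw [dd, e1, e2]
    have h1 : |sc k * (1 + 1/8) - sc k * (1 + 1/2)| = sc k * (3/8) := by
      rw [abs_of_nonpos (by nlinarith)]; ring
    have h2 : |sc k * ((1 - Real.sqrt 2 / 2) / π) - sc k * (2 / π)|
        = sc k * ((1 + Real.sqrt 2 / 2) / π) := by
      rw [abs_of_nonpos (by nlinarith), ← hgap]; ring
    rw [h1, h2]
    apply max_eq_right
    nlinarith
  · rw [dd, e2, e3]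
    have h1 : |sc k * (1 + 1/2) - sc k * (1 + 7/8)| = sc k * (3/8) := by
      rw [abs_of_nonpos (by nlinarith)]; ring
    have h2 : |sc k * (2 / π) - sc k * ((1 - Real.sqrt 2 / 2) / π)|
        = sc k * ((1 + Real.sqrt 2 / 2) / π) := by
      rw [abs_of_nonneg (by nlinarith), hgap]
    rw [h1, h2]
    apply max_eq_right
    nlinarith
  · rw [dd, e1, e3]
    have h1 : |sc k * (1 + 1/8) - sc k * (1 + 7/8)| = sc k * (3/4) := by
      rw [abs_of_nonpos (by nlinarith)]; ring
    have h2 : |sc k * ((1 - Real.sqrt 2 / 2) / π) - sc k * ((1 - Real.sqrt 2 / 2) / π)|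
        = 0 := by rw [sub_self, abs_zero]
    rw [h1, h2]
    apply max_eq_left
    nlinarith

lemma core (s t : ℕ → Prop) (k : ℕ) (hsk : s k) (htk : ¬ t k) (e : Pt s ≃ Pt t)
    (he : ∀ p q : Pt s, dist (e p) (e q) ≤ (100 / 99) ^ 2 * dist p q)
    (he2 : ∀ p q : Pt s, dist p q ≤ (100 / 99) ^ 2 * dist (e p) (e q)) : False := by
  have hsc := sc_pos k
  have hsc1 := sc_le k
  have hm1 : sc k * (1 + 1/8) ∈ Set.Icc (0:ℝ) 1 := ⟨by nlinarith, by nlinarith⟩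
  have hm2 : sc k * (1 + 1/2) ∈ Set.Icc (0:ℝ) 1 := ⟨by nlinarith, by nlinarith⟩
  have hm3 : sc k * (1 + 7/8) ∈ Set.Icc (0:ℝ) 1 := ⟨by nlinarith, by nlinarith⟩
  set P1 : Pt s := ⟨sc k * (1 + 1/8), hm1⟩ with hP1
  set P2 : Pt s := ⟨sc k * (1 + 1/2), hm2⟩ with hP2
  set P3 : Pt s := ⟨sc k * (1 + 7/8), hm3⟩ with hP3
  obtain ⟨d12, d23, d13⟩ := trip_dists s hsk
  obtain ⟨hC1, hC2⟩ := CC_bounds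
  set C := (1 + Real.sqrt 2 / 2) / π with hC
  have hd12 : dist P1 P2 = sc k * C := d12
  have hd23 : dist P2 P3 = sc k * C := d23
  have hd13 : dist P1 P3 = sc k * (3/4) := d13
  set v := (99/100)^2 * (C * sc k) with hv
  have hv1 : 2/5 * sc k ≤ v := by rw [hv]; nlinarith
  have hv2 : v ≤ 14/25 * sc k := by rw [hv]; nlinarith
  apply noTriple t k htk v hv1 hv2 (e P1).x (e P2).x (e P3).x
  · constructor
    · have h := he2 P1 P2
      rw [hd12] at h
      rw [← Pt.dist_def]
      nlinarith [dist_nonneg (x := e P1) (y := e P2)]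
    · have h := he P1 P2
      rw [hd12] at h
      rw [← Pt.dist_def]
      nlinarith [dist_nonneg (x := e P1) (y := e P2)]
  · constructor
    · have h := he2 P1 P3
      rw [hd13] at h
      rw [← Pt.dist_def]
      nlinarith [dist_nonneg (x := e P1) (y := e P3)]
    · have h := he P1 P3
      rw [hd13] at h
      rw [← Pt.dist_def]
      nlinarith [dist_nonneg (x := e P1) (y := e P3)]
  · constructor
    · have h := he2 P2 P3
      rw [hd23] at h
      rw [← Pt.dist_def]
      nlinarith [dist_nonneg (x := e P2) (y := e P3)]
    · have h := he P2 P3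
      rw [hd23] at h
      rw [← Pt.dist_def]
      nlinarith [dist_nonneg (x := e P2) (y := e P3)]

end MINS
/-- The space of isometry classes of compact metric spaces at finite Lipschitz distance
from `[0,1]` is not separable: no countable family in it is `d_L`-dense. -/
theorem MI_not_separable :
    ¬ ∃ D : ℕ → CptMet,
      (∀ n, lipDist ↥(Set.Icc (0:ℝ) 1) (D n).carrier ≠ ⊤) ∧
      (∀ Y : CptMet, lipDist ↥(Set.Icc (0:ℝ) 1) Y.carrier ≠ ⊤ →
        ∀ ε : ℝ≥0∞, 0 < ε → ∃ n, lipDist Y.carrier (D n).carrier < ε) := by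
  rintro ⟨D, -, hdense⟩
  have key : ∀ s : ℕ → Prop,
      ∃ n, lipDist (MINS.Pt s) ((D n).carrier) < ENNReal.ofReal (1 / 100) := by
    intro s
    have hfin : lipDist (↥(Set.Icc (0:ℝ) 1)) (MINS.Pt s) ≠ ⊤ :=
      MINS.lipDist_ne_top' (MINS.toPt s) (MINS.biLip_toPt s)
    exact hdense ⟨MINS.Pt s⟩ hfin _ (ENNReal.ofReal_pos.mpr (by norm_num))
  choose Φ hΦ using key
  have hni : ¬ Function.Injective Φ := Function.cantor_injective Φ
  rw [Function.not_injective_iff] at hni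
  obtain ⟨s, t, hfeq, hst⟩ := hni
  obtain ⟨k, hk⟩ := Function.ne_iff.mp hst
  obtain ⟨f, hf1, hf2⟩ := MINS.extract (hΦ s)
  have hts := hΦ t
  rw [← hfeq] at hts
  obtain ⟨g, hg1, hg2⟩ := MINS.extract hts
  set e : MINS.Pt s ≃ MINS.Pt t := f.trans g.symm with hedef
  have heapp : ∀ p : MINS.Pt s, e p = g.symm (f p) := fun p => rfl
  have he : ∀ p q : MINS.Pt s, dist (e p) (e q) ≤ (100 / 99) ^ 2 * dist p q := by
    intro p q
    rw [heapp, heapp]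
    calc dist (g.symm (f p)) (g.symm (f q)) ≤ 100 / 99 * dist (f p) (f q) := hg2 _ _
      _ ≤ 100 / 99 * (100 / 99 * dist p q) := by
          have := hf1 p q
          nlinarith [dist_nonneg (x := f p) (y := f q)]
      _ = (100 / 99) ^ 2 * dist p q := by ring
  have he2 : ∀ p q : MINS.Pt s, dist p q ≤ (100 / 99) ^ 2 * dist (e p) (e q) := by
    intro p q
    have h1 : dist p q ≤ 100 / 99 * dist (f p) (f q) := by
      have := hf2 (f p) (f q)
      rwa [Equiv.symm_apply_apply, Equiv.symm_apply_apply] at this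
    have h2 : dist (f p) (f q) ≤ 100 / 99 * dist (e p) (e q) := by
      have := hg1 (e p) (e q)
      rw [heapp, heapp, Equiv.apply_symm_apply, Equiv.apply_symm_apply] at this
      exact this
    calc dist p q ≤ 100 / 99 * dist (f p) (f q) := h1
      _ ≤ 100 / 99 * (100 / 99 * dist (e p) (e q)) := by
          nlinarith [dist_nonneg (x := e p) (y := e q)]
      _ = (100 / 99) ^ 2 * dist (e p) (e q) := by ring
  have hesymm : ∀ p q : MINS.Pt t, dist (e.symm p) (e.symm q) ≤ (100 / 99) ^ 2 * dist p q := by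
    intro p q
    have := he2 (e.symm p) (e.symm q)
    rwa [Equiv.apply_symm_apply, Equiv.apply_symm_apply] at this
  have hesymm2 : ∀ p q : MINS.Pt t, dist p q ≤ (100 / 99) ^ 2 * dist (e.symm p) (e.symm q) := by
    intro p q
    have := he (e.symm p) (e.symm q)
    rwa [Equiv.apply_symm_apply, Equiv.apply_symm_apply] at this
  by_cases hs : s k <;> by_cases ht : t k
  · exact hk (propext (iff_of_true hs ht))
  · exact MINS.core s t k hs ht e he he2
  · exact MINS.core t s k ht hs e.symm hesymm hesymm2
  · exact hk (propext (iff_of_false hs ht))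
end

section
/- For every δ > 0, the open ball B_{d_L}([0,1], δ) = {X ∈ ℳ_{[0,1]} : d_L([0,1], X) < δ}, with the metric d_L, is not separable. -/
open ENNReal

section Framework
variable {X Y : Type*} [MetricSpace X] [MetricSpace Y]

lemma dil_set_nonempty (f : X → Y) (h : ∃ K : NNReal, LipschitzWith K f) :
    Set.Nonempty {K : ℝ | ∀ x y : X, dist (f x) (f y) ≤ K * dist x y} := by
  obtain ⟨K, hK⟩ := h
  exact ⟨K, fun a b => hK.dist_le_mul a b⟩

lemma dist_le_dil (f : X → Y) (h : ∃ K : NNReal, LipschitzWith K f) (x y : X) :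
    dist (f x) (f y) ≤ dil f * dist x y := by
  rcases eq_or_ne x y with rfl | hxy
  · simp
  · have hd : 0 < dist x y := dist_pos.mpr hxy
    have key : dist (f x) (f y) / dist x y ≤ dil f := by
      apply le_csInf (dil_set_nonempty f h)
      intro K hK
      exact (div_le_iff₀ hd).mpr (hK x y)
    calc dist (f x) (f y) = (dist (f x) (f y) / dist x y) * dist x y := by
          field_simp
      _ ≤ dil f * dist x y := by
          exact mul_le_mul_of_nonneg_right key hd.le

lemma dil_nonneg (f : X → Y) [Nontrivial X] (h : ∃ K : NNReal, LipschitzWith K f) :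
    0 ≤ dil f := by
  apply le_csInf (dil_set_nonempty f h)
  intro K hK
  obtain ⟨x, y, hxy⟩ := exists_pair_ne X
  have h1 := hK x y
  have h2 : 0 < dist x y := dist_pos.mpr hxy
  nlinarith [dist_nonneg (x := f x) (y := f y)]

lemma equiv_nontrivial (f : X ≃ Y) [Nontrivial X] : Nontrivial Y := by
  obtain ⟨x, y, hxy⟩ := exists_pair_ne X
  exact ⟨f x, f y, fun h => hxy (f.injective h)⟩

lemma one_le_dil_mul (f : X ≃ Y) [Nontrivial X] (hf : IsBiLipschitzEquiv f) :
    1 ≤ dil (f : X → Y) * dil (f.symm : Y → X) := by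
  obtain ⟨x, y, hxy⟩ := exists_pair_ne X
  have hd : 0 < dist x y := dist_pos.mpr hxy
  haveI : Nontrivial Y := equiv_nontrivial f
  have h1 : dist x y ≤ dil (f.symm : Y → X) * dist (f x) (f y) := by
    have := dist_le_dil (f.symm : Y → X) hf.2 (f x) (f y)
    simpa using this
  have h2 : dist (f x) (f y) ≤ dil (f : X → Y) * dist x y :=
    dist_le_dil (f : X → Y) hf.1 x y
  have hA := dil_nonneg (f : X → Y) hf.1
  have hA' := dil_nonneg (f.symm : Y → X) hf.2
  nlinarith

lemma biLip_bounds (f : X ≃ Y) [Nontrivial X] (hf : IsBiLipschitzEquiv f) {c : ℝ}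
    (hc : lipCost f < c) :
    (∀ x y : X, dist (f x) (f y) ≤ Real.exp c * dist x y) ∧
    (∀ x y : X, dist x y ≤ Real.exp c * dist (f x) (f y)) := by
  haveI : Nontrivial Y := equiv_nontrivial f
  set A := dil (f : X → Y) with hA
  set A' := dil (f.symm : Y → X) with hA'
  have hA0 : 0 ≤ A := dil_nonneg _ hf.1
  have hA'0 : 0 ≤ A' := dil_nonneg _ hf.2
  have h1 : 1 ≤ A * A' := one_le_dil_mul f hf
  have hApos : 0 < A := by nlinarith
  have hA'pos : 0 < A' := by nlinarith
  have hcost : |Real.log A| + |Real.log A'| < c := hc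
  have hlogA : Real.log A < c := by
    have := abs_nonneg (Real.log A')
    have := le_abs_self (Real.log A)
    linarith
  have hlogA' : Real.log A' < c := by
    have := abs_nonneg (Real.log A)
    have := le_abs_self (Real.log A')
    linarith
  have hAe : A ≤ Real.exp c := by
    rw [← Real.exp_log hApos]
    exact (Real.exp_le_exp.mpr hlogA.le)
  have hA'e : A' ≤ Real.exp c := by
    rw [← Real.exp_log hA'pos]
    exact (Real.exp_le_exp.mpr hlogA'.le)
  constructor
  · intro x y
    calc dist (f x) (f y) ≤ A * dist x y := dist_le_dil _ hf.1 x y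
      _ ≤ Real.exp c * dist x y := mul_le_mul_of_nonneg_right hAe dist_nonneg
  · intro x y
    have h := dist_le_dil (f.symm : Y → X) hf.2 (f x) (f y)
    simp only [Equiv.symm_apply_apply] at h
    calc dist x y ≤ A' * dist (f x) (f y) := h
      _ ≤ Real.exp c * dist (f x) (f y) := mul_le_mul_of_nonneg_right hA'e dist_nonneg

lemma exists_equiv_of_lipDist_lt {c : ℝ} (hc : 0 < c)
    (h : lipDist X Y < ENNReal.ofReal c) :
    ∃ f : X ≃ Y, IsBiLipschitzEquiv f ∧ lipCost f < c := by
  rw [lipDist, iInf_lt_iff] at h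
  obtain ⟨f, hf⟩ := h
  rw [iInf_lt_iff] at hf
  obtain ⟨hbi, hlt⟩ := hf
  exact ⟨f, hbi, (ENNReal.ofReal_lt_ofReal_iff hc).mp hlt⟩

end Framework

structure MyC (G : ℝ → ℝ) (η : ℝ) where
  val : ℝ
  property : val ∈ Set.Icc (0:ℝ) 1

namespace MyC
variable {G : ℝ → ℝ} {η : ℝ}

instance metricSpace (G : ℝ → ℝ) (η : ℝ) : MetricSpace (MyC G η) where
  dist a b := |a.val - b.val| + |η| * |G a.val - G b.val|
  dist_self a := by simp
  dist_comm a b := by simp [abs_sub_comm a.val b.val, abs_sub_comm (G a.val) (G b.val)]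
  dist_triangle a b c := by
    have h1 : |a.val - c.val| ≤ |a.val - b.val| + |b.val - c.val| := abs_sub_le _ _ _
    have h2 : |G a.val - G c.val| ≤ |G a.val - G b.val| + |G b.val - G c.val| := abs_sub_le _ _ _
    have h3 : 0 ≤ |η| := abs_nonneg η
    show |a.val - c.val| + |η| * |G a.val - G c.val| ≤ (|a.val - b.val| + |η| * |G a.val - G b.val|) + (|b.val - c.val| + |η| * |G b.val - G c.val|)
    nlinarith
  eq_of_dist_eq_zero := by
    intro a b h
    have h1 : 0 ≤ |a.val - b.val| := abs_nonneg _
    have h2 : 0 ≤ |η| * |G a.val - G b.val| :=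
      mul_nonneg (abs_nonneg _) (abs_nonneg _)
    have h3 : |a.val - b.val| = 0 := by
      change |a.val - b.val| + |η| * |G a.val - G b.val| = 0 at h; linarith [le_antisymm (by linarith : |a.val - b.val| ≤ 0) h1]
    have : a.val = b.val := by
      have := abs_eq_zero.mp h3; linarith
    cases a; cases b; simp_all

lemma dist_eq (a b : MyC G η) :
    dist a b = |a.val - b.val| + |η| * |G a.val - G b.val| := rfl

instance instNontrivial (G : ℝ → ℝ) (η : ℝ) : Nontrivial (MyC G η) := by
  refine ⟨⟨0, by norm_num⟩, ⟨1, by norm_num⟩, ?_⟩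
  intro h
  have : (0:ℝ) = 1 := congrArg MyC.val h
  norm_num at this

def equivIcc (G : ℝ → ℝ) (η : ℝ) : ↥(Set.Icc (0:ℝ) 1) ≃ MyC G η where
  toFun t := ⟨t.1, t.2⟩
  invFun p := ⟨p.val, p.property⟩
  left_inv _ := rfl
  right_inv _ := rfl

lemma equivIcc_lipschitz (hG : ∀ x y : ℝ, |G x - G y| ≤ |x - y|) :
    LipschitzWith (Real.toNNReal (1 + |η|)) (equivIcc G η) := by
  apply LipschitzWith.of_dist_le_mul
  intro s t
  have h1 : dist (equivIcc G η s) (equivIcc G η t) =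
      |s.1 - t.1| + |η| * |G s.1 - G t.1| := rfl
  have h2 : dist s t = |s.1 - t.1| := Subtype.dist_eq s t ▸ Real.dist_eq _ _
  rw [h1, h2, Real.coe_toNNReal _ (by positivity : (0:ℝ) ≤ 1 + |η|)]
  have := hG s.1 t.1
  have h3 : 0 ≤ |η| := abs_nonneg η
  nlinarith [abs_nonneg (s.1 - t.1)]

lemma equivIcc_symm_lipschitz : LipschitzWith 1 (equivIcc G η).symm := by
  apply LipschitzWith.of_dist_le_mul
  intro p q
  have h2 : dist ((equivIcc G η).symm p) ((equivIcc G η).symm q) = |p.val - q.val| := by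
    rw [Subtype.dist_eq, Real.dist_eq]; rfl
  rw [h2]
  have : (((1:NNReal)):ℝ) = 1 := rfl
  rw [this, one_mul, dist_eq]
  nlinarith [abs_nonneg (G p.val - G q.val), abs_nonneg η,
    mul_nonneg (abs_nonneg η) (abs_nonneg (G p.val - G q.val))]

-- elements 0 and 1 of the standard Icc
def z0 : ↥(Set.Icc (0:ℝ) 1) := ⟨0, by norm_num⟩
def z1 : ↥(Set.Icc (0:ℝ) 1) := ⟨1, by norm_num⟩

lemma dist_z0_z1 : dist z0 z1 = 1 := by
  rw [Subtype.dist_eq, Real.dist_eq]; norm_num [z0, z1]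

lemma ball_mem (hη : 0 ≤ η) (hG : ∀ x y : ℝ, |G x - G y| ≤ |x - y|)
    (hG10 : G 1 = G 0) :
    lipDist ↥(Set.Icc (0:ℝ) 1) (MyC G η) ≤ ENNReal.ofReal (Real.log (1 + η)) := by
  set e := equivIcc G η with he
  have habs : |η| = η := abs_of_nonneg hη
  have hbi : IsBiLipschitzEquiv e :=
    ⟨⟨_, equivIcc_lipschitz hG⟩, ⟨_, equivIcc_symm_lipschitz⟩⟩
  have hdistK : dist (e z0) (e z1) = 1 := by
    rw [dist_eq, habs]
    have : (e z0).val = 0 ∧ (e z1).val = 1 := ⟨rfl, rfl⟩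
    rw [this.1, this.2]
    rw [hG10]
    simp
  -- dil e ∈ [1, 1+η]
  have hd1 : dil (e : ↥(Set.Icc (0:ℝ) 1) → MyC G η) ≤ 1 + η := by
    apply csInf_le
    · refine ⟨1, fun K hK => ?_⟩
      have := hK z0 z1
      rw [hdistK, dist_z0_z1, mul_one] at this
      linarith
    · intro s t
      have h1 : dist (e s) (e t) = |s.1 - t.1| + η * |G s.1 - G t.1| := by
        rw [dist_eq, habs]; rfl
      have h2 : dist s t = |s.1 - t.1| := Subtype.dist_eq s t ▸ Real.dist_eq _ _
      rw [h1, h2]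
      have := hG s.1 t.1
      nlinarith [abs_nonneg (s.1 - t.1)]
  have hd2 : 1 ≤ dil (e : ↥(Set.Icc (0:ℝ) 1) → MyC G η) := by
    apply le_csInf
    · exact ⟨1 + η, by
        intro s t
        have h1 : dist (e s) (e t) = |s.1 - t.1| + η * |G s.1 - G t.1| := by
          rw [dist_eq, habs]; rfl
        have h2 : dist s t = |s.1 - t.1| := Subtype.dist_eq s t ▸ Real.dist_eq _ _
        rw [h1, h2]
        have := hG s.1 t.1
        nlinarith [abs_nonneg (s.1 - t.1)]⟩
    · intro K hK
      have := hK z0 z1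
      rw [hdistK, dist_z0_z1, mul_one] at this
      linarith
  -- dil e.symm = 1
  have hs1 : dil (e.symm : MyC G η → ↥(Set.Icc (0:ℝ) 1)) ≤ 1 := by
    apply csInf_le
    · refine ⟨1, fun K hK => ?_⟩
      have := hK (e z0) (e z1)
      simp only [Equiv.symm_apply_apply] at this
      rw [hdistK, dist_z0_z1, mul_one] at this
      linarith
    · intro p q
      have h2 : dist (e.symm p) (e.symm q) = |p.val - q.val| := by
        rw [Subtype.dist_eq, Real.dist_eq]; rfl
      rw [h2, one_mul, dist_eq]
      nlinarith [abs_nonneg (G p.val - G q.val), abs_nonneg η,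
        mul_nonneg (abs_nonneg η) (abs_nonneg (G p.val - G q.val))]
  have hs2 : 1 ≤ dil (e.symm : MyC G η → ↥(Set.Icc (0:ℝ) 1)) := by
    apply le_csInf
    · exact ⟨1, by
        intro p q
        have h2 : dist (e.symm p) (e.symm q) = |p.val - q.val| := by
          rw [Subtype.dist_eq, Real.dist_eq]; rfl
        rw [h2, one_mul, dist_eq]
        nlinarith [abs_nonneg (G p.val - G q.val), abs_nonneg η,
          mul_nonneg (abs_nonneg η) (abs_nonneg (G p.val - G q.val))]⟩
    · intro K hK
      have := hK (e z0) (e z1)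
      simp only [Equiv.symm_apply_apply] at this
      rw [hdistK, dist_z0_z1, mul_one] at this
      linarith
  have hsymm : dil (e.symm : MyC G η → ↥(Set.Icc (0:ℝ) 1)) = 1 := le_antisymm hs1 hs2
  have hcost : lipCost e ≤ Real.log (1 + η) := by
    rw [lipCost, hsymm]
    simp only [Real.log_one, abs_zero, add_zero]
    rw [abs_of_nonneg (Real.log_nonneg hd2)]
    exact Real.log_le_log (by linarith) hd1
  calc lipDist ↥(Set.Icc (0:ℝ) 1) (MyC G η)
      ≤ ENNReal.ofReal (lipCost e) := iInf₂_le e hbi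
    _ ≤ ENNReal.ofReal (Real.log (1 + η)) := ENNReal.ofReal_le_ofReal hcost

lemma compactSpace (hG : ∀ x y : ℝ, |G x - G y| ≤ |x - y|) : CompactSpace (MyC G η) := by
  have hcont : Continuous (equivIcc G η) := (equivIcc_lipschitz hG).continuous
  have hsurj : Function.Surjective (equivIcc G η) := (equivIcc G η).surjective
  constructor
  rw [← hsurj.range_eq]
  exact isCompact_range hcont


end MyC




/-! Geometry of the tent family. -/

noncomputable def ww (m : ℕ) : ℝ := (1/100)^(m+1)
noncomputable def qq (m : ℕ) : ℝ := 2 * ∑ j ∈ Finset.range m, ww j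

lemma ww_pos (m : ℕ) : 0 < ww m := by rw [ww]; positivity

lemma ww_succ (m : ℕ) : ww (m+1) = ww m * (1/100) := by
  rw [ww, ww, pow_succ]

lemma ww_mono {m k : ℕ} (h : m ≤ k) : ww k ≤ ww m := by
  rw [ww, ww]
  exact pow_le_pow_of_le_one (by norm_num) (by norm_num) (by omega)

lemma ww_le_one (m : ℕ) : ww m ≤ 1/100 := by
  have := ww_mono (Nat.zero_le m)
  simpa [ww] using this

lemma ww_big {m n : ℕ} (h : m < n) : 100 * ww n ≤ ww m := by
  have h1 : ww n ≤ ww (m+1) := ww_mono h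
  rw [ww_succ] at h1
  have := ww_pos m
  linarith

lemma qq_nonneg (m : ℕ) : 0 ≤ qq m := by
  rw [qq]
  have h : ∀ j ∈ Finset.range m, (0:ℝ) ≤ ww j := fun j _ => (ww_pos j).le
  have := Finset.sum_nonneg h
  linarith

lemma qq_succ (m : ℕ) : qq (m+1) = qq m + 2 * ww m := by
  rw [qq, qq, Finset.sum_range_succ]; ring

lemma qq_mono {m k : ℕ} (h : m ≤ k) : qq m ≤ qq k := by
  rw [qq, qq]
  have : ∑ j ∈ Finset.range m, ww j ≤ ∑ j ∈ Finset.range k, ww j :=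
    Finset.sum_le_sum_of_subset_of_nonneg (Finset.range_subset_range.mpr h)
      (fun j _ _ => (ww_pos j).le)
  linarith

lemma qq_bound (m : ℕ) : qq m ≤ 2/99 - (2/99) * (1/100)^m := by
  induction m with
  | zero => simp [qq]
  | succ k ih =>
      rw [qq_succ]
      have : ww k = (1/100)^(k+1) := rfl
      rw [this, pow_succ]
      have hp : (0:ℝ) ≤ (1/100)^k := by positivity
      nlinarith

lemma qq_two_ww (m : ℕ) : qq m + 2 * ww m ≤ 2/99 := by
  have h1 := qq_bound m
  have : ww m = (1/100)^(m+1) := rfl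
  rw [this, pow_succ] at *
  have hp : (0:ℝ) ≤ (1/100)^m := by positivity
  nlinarith

lemma qq_ww_le_one (m : ℕ) : qq m + ww m ≤ 1 := by
  have := qq_two_ww m
  have := ww_pos m
  linarith

section Tents
variable (pres : ℕ → Prop) [DecidablePred pres]

noncomputable def tentF (m : ℕ) (x : ℝ) : ℝ :=
  if pres m then max 0 (min (min (x - qq m) (ww m / 4)) (qq m + ww m - x)) else 0

noncomputable def gF (x : ℝ) : ℝ := ⨆ m, tentF pres m x

variable {pres}

lemma tent_nonneg (m : ℕ) (x : ℝ) : 0 ≤ tentF pres m x := by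
  unfold tentF; split_ifs
  · exact le_max_left _ _
  · exact le_refl 0

lemma tent_le (m : ℕ) (x : ℝ) : tentF pres m x ≤ ww m / 4 := by
  unfold tentF; split_ifs
  · apply max_le
    · linarith [ww_pos m]
    · exact le_trans (min_le_left _ _) (min_le_right _ _)
  · linarith [ww_pos m]

lemma tent_vanish_left {m : ℕ} {x : ℝ} (h : x ≤ qq m) : tentF pres m x = 0 := by
  unfold tentF; split_ifs
  · apply le_antisymm _ (le_max_left _ _)
    apply max_le le_rfl
    calc min (min (x - qq m) (ww m / 4)) (qq m + ww m - x)
        ≤ x - qq m := le_trans (min_le_left _ _) (min_le_left _ _)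
      _ ≤ 0 := by linarith
  · rfl

lemma tent_vanish_right {m : ℕ} {x : ℝ} (h : qq m + ww m ≤ x) : tentF pres m x = 0 := by
  unfold tentF; split_ifs
  · apply le_antisymm _ (le_max_left _ _)
    apply max_le le_rfl
    calc min (min (x - qq m) (ww m / 4)) (qq m + ww m - x)
        ≤ qq m + ww m - x := min_le_right _ _
      _ ≤ 0 := by linarith
  · rfl

lemma tent_ne_zero {m : ℕ} {x : ℝ} (h : tentF pres m x ≠ 0) :
    qq m < x ∧ x < qq m + ww m := by
  constructor
  · by_contra hc
    exact h (tent_vanish_left (by linarith [not_lt.mp hc]))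
  · by_contra hc
    exact h (tent_vanish_right (by linarith [not_lt.mp hc]))

lemma gF_bddAbove (x : ℝ) : BddAbove (Set.range fun m => tentF pres m x) := by
  refine ⟨1, fun v hv => ?_⟩
  obtain ⟨m, rfl⟩ := hv
  calc tentF pres m x ≤ ww m / 4 := tent_le m x
    _ ≤ 1 := by linarith [ww_le_one m]

lemma gF_nonneg (x : ℝ) : 0 ≤ gF pres x :=
  le_trans (tent_nonneg 0 x) (le_ciSup (gF_bddAbove x) 0)

lemma gF_eval {m : ℕ} {x : ℝ} (h : ∀ m' ≠ m, tentF pres m' x = 0) :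
    gF pres x = tentF pres m x := by
  apply le_antisymm
  · apply ciSup_le
    intro m'
    rcases eq_or_ne m' m with rfl | hne
    · exact le_rfl
    · rw [h m' hne]; exact tent_nonneg m x
  · exact le_ciSup (gF_bddAbove x) m

lemma tent_lip (m : ℕ) (x y : ℝ) : |tentF pres m x - tentF pres m y| ≤ |x - y| := by
  unfold tentF; split_ifs
  · calc |max 0 (min (min (x - qq m) (ww m / 4)) (qq m + ww m - x)) -
        max 0 (min (min (y - qq m) (ww m / 4)) (qq m + ww m - y))|
        ≤ max |(0:ℝ) - 0| |min (min (x - qq m) (ww m / 4)) (qq m + ww m - x) -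
            min (min (y - qq m) (ww m / 4)) (qq m + ww m - y)| :=
          abs_max_sub_max_le_max _ _ _ _
      _ ≤ |x - y| := by
          apply max_le
          · simp [abs_nonneg]
          · calc |min (min (x - qq m) (ww m / 4)) (qq m + ww m - x) -
                min (min (y - qq m) (ww m / 4)) (qq m + ww m - y)|
                ≤ max |min (x - qq m) (ww m / 4) - min (y - qq m) (ww m / 4)|
                    |(qq m + ww m - x) - (qq m + ww m - y)| := abs_min_sub_min_le_max _ _ _ _
              _ ≤ |x - y| := by
                  apply max_le
                  · calc |min (x - qq m) (ww m / 4) - min (y - qq m) (ww m / 4)|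
                        ≤ max |(x - qq m) - (y - qq m)| |ww m / 4 - ww m / 4| :=
                          abs_min_sub_min_le_max _ _ _ _
                      _ ≤ |x - y| := by
                          apply max_le
                          · apply le_of_eq; congr 1; ring
                          · simp [abs_nonneg]
                  · rw [show (qq m + ww m - x) - (qq m + ww m - y) = -(x - y) by ring,
                      abs_neg]
  · simp [abs_nonneg]

lemma gF_lip (x y : ℝ) : |gF pres x - gF pres y| ≤ |x - y| := by
  have key : ∀ a b : ℝ, gF pres a ≤ gF pres b + |a - b| := by
    intro a b
    apply ciSup_le
    intro m
    calc tentF pres m a ≤ tentF pres m b + |a - b| := by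
          have := tent_lip (pres := pres) m a b
          have := le_abs_self (tentF pres m a - tentF pres m b)
          linarith
      _ ≤ (⨆ m, tentF pres m b) + |a - b| := by
          have := le_ciSup (gF_bddAbove (pres := pres) b) m
          linarith
      _ = gF pres b + |a - b| := rfl
  rw [abs_le]
  constructor
  · have := key y x
    rw [abs_sub_comm] at this
    linarith
  · have := key x y
    linarith

lemma gF_zero : gF pres 0 = 0 := by
  rw [gF_eval (m := 0) (fun m' _ => tent_vanish_left (qq_nonneg m'))]
  exact tent_vanish_left (le_of_eq (by simp [qq]))

lemma gF_one : gF pres 1 = 0 := by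
  rw [gF_eval (m := 0) (fun m' _ => tent_vanish_right (qq_ww_le_one m'))]
  exact tent_vanish_right (qq_ww_le_one 0)

lemma gF_cont : Continuous (gF pres) := by
  have : LipschitzWith 1 (gF pres) := by
    apply LipschitzWith.of_dist_le_mul
    intro x y
    rw [Real.dist_eq, Real.dist_eq]
    simpa using gF_lip (pres := pres) x y
  exact this.continuous

end Tents

/-! Midpoint lemmas -/

lemma avg_le_max (a b : ℝ) : (a + b) / 2 ≤ max a b := by
  rcases le_total a b with h | h
  · rw [max_eq_right h]; linarith
  · rw [max_eq_left h]; linarith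

lemma mono_mid (G : ℝ → ℝ) (hGc : Continuous G) (η : ℝ) (hη : 0 ≤ η)
    (u v : ℝ) (huv : u ≤ v)
    (hmono : ∀ z₁ z₂, u ≤ z₁ → z₁ ≤ z₂ → z₂ ≤ v → G z₁ ≤ G z₂) :
    ∃ z, u ≤ z ∧ z ≤ v ∧
      (z - u) + η * (G z - G u) = ((v - u) + η * (G v - G u)) / 2 ∧
      (v - z) + η * (G v - G z) = ((v - u) + η * (G v - G u)) / 2 := by
  set d := (v - u) + η * (G v - G u) with hd
  have hGuv : G u ≤ G v := hmono u v le_rfl huv le_rfl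
  have hd0 : 0 ≤ d := by rw [hd]; nlinarith
  set l : ℝ → ℝ := fun z => (z - u) + η * (G z - G u) with hl
  have hcont : ContinuousOn l (Set.Icc u v) :=
    ((continuous_id.sub continuous_const).add
      (continuous_const.mul (hGc.sub continuous_const))).continuousOn
  have hlu : l u = 0 := by simp [hl]
  have hlv : l v = d := rfl
  have hmem : d / 2 ∈ Set.Icc (l u) (l v) := by
    rw [hlu, hlv]
    exact ⟨by linarith, by linarith⟩
  obtain ⟨z, hz, hzeq⟩ := intermediate_value_Icc huv hcont hmem
  refine ⟨z, hz.1, hz.2, hzeq, ?_⟩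
  have h2 : (v - z) + η * (G v - G z) = d - l z := by rw [hl, hd]; ring
  rw [h2, hzeq]; ring

section TentMono
variable {pres : ℕ → Prop} [DecidablePred pres]

lemma tent_mono {m : ℕ} {z₁ z₂ : ℝ} (h12 : z₁ ≤ z₂) (h2 : z₂ ≤ qq m + ww m - ww m / 4) :
    tentF pres m z₁ ≤ tentF pres m z₂ := by
  unfold tentF; split_ifs
  · apply max_le_max le_rfl
    calc min (min (z₁ - qq m) (ww m / 4)) (qq m + ww m - z₁)
        ≤ min (z₁ - qq m) (ww m / 4) := min_le_left _ _
      _ ≤ min (z₂ - qq m) (ww m / 4) := min_le_min (by linarith) le_rfl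
      _ = min (min (z₂ - qq m) (ww m / 4)) (qq m + ww m - z₂) :=
          (min_eq_left (calc min (z₂ - qq m) (ww m / 4) ≤ ww m / 4 := min_le_right _ _
            _ ≤ qq m + ww m - z₂ := by linarith)).symm
  · exact le_rfl

lemma tent_anti {m : ℕ} {z₁ z₂ : ℝ} (h12 : z₁ ≤ z₂) (h1 : qq m + ww m / 4 ≤ z₁) :
    tentF pres m z₂ ≤ tentF pres m z₁ := by
  unfold tentF; split_ifs
  · apply max_le_max le_rfl
    have hz1 : min (z₁ - qq m) (ww m / 4) = ww m / 4 := min_eq_right (by linarith)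
    calc min (min (z₂ - qq m) (ww m / 4)) (qq m + ww m - z₂)
        ≤ min (ww m / 4) (qq m + ww m - z₂) :=
          le_min (le_trans (min_le_left _ _) (min_le_right _ _)) (min_le_right _ _)
      _ ≤ min (ww m / 4) (qq m + ww m - z₁) := min_le_min le_rfl (by linarith)
      _ = min (min (z₁ - qq m) (ww m / 4)) (qq m + ww m - z₁) := by rw [hz1]
  · exact le_rfl

end TentMono

/-! The two key facts about the space `MyC (gF pres) η`. -/

lemma H1 (pres : ℕ → Prop) [DecidablePred pres] {η : ℝ} (hη0 : 0 ≤ η) (hη1 : η ≤ 1)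
    {n : ℕ} (hn : pres n) :
    ∃ x y : MyC (gF pres) η, dist x y = ww n ∧
      ∀ z : MyC (gF pres) η, (1/2 + η/8) * ww n ≤ max (dist x z) (dist z y) := by
  have habs : |η| = η := abs_of_nonneg hη0
  set a := qq n with ha
  set W := ww n with hW
  have hW0 : 0 < W := ww_pos n
  have haW : a + W ≤ 1 := qq_ww_le_one n
  have ha0 : 0 ≤ a := qq_nonneg n
  -- vanishing of all tents at the two base points
  have hvx : ∀ m' : ℕ, tentF pres m' a = 0 := by
    intro m'
    rcases lt_trichotomy m' n with h | rfl | h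
    · apply tent_vanish_right
      have h1 : qq (m'+1) ≤ qq n := qq_mono h
      rw [qq_succ] at h1
      have := ww_pos m'
      rw [← ha] at h1
      linarith
    · exact tent_vanish_left le_rfl
    · apply tent_vanish_left
      have h1 : qq n ≤ qq m' := qq_mono h.le
      linarith
  have hvy : ∀ m' : ℕ, tentF pres m' (a + W) = 0 := by
    intro m'
    rcases lt_trichotomy m' n with h | rfl | h
    · apply tent_vanish_right
      have h1 : qq (m'+1) ≤ qq n := qq_mono h
      rw [qq_succ] at h1
      have := ww_pos m'
      rw [← ha] at h1
      linarith
    · exact tent_vanish_right le_rfl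
    · apply tent_vanish_left
      have h1 : qq (n+1) ≤ qq m' := qq_mono h
      rw [qq_succ, ← ha, ← hW] at h1
      linarith
  have hgx : gF pres a = 0 := by
    rw [gF_eval (m := n) (fun m' _ => hvx m')]; exact hvx n
  have hgy : gF pres (a + W) = 0 := by
    rw [gF_eval (m := n) (fun m' _ => hvy m')]; exact hvy n
  refine ⟨⟨a, ⟨ha0, by linarith⟩⟩, ⟨a + W, ⟨by linarith, haW⟩⟩, ?_, ?_⟩
  · rw [MyC.dist_eq]
    simp only [hgx, hgy]
    rw [show a - (a + W) = -W by ring, abs_neg, abs_of_nonneg hW0.le]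
    simp
  · intro z
    set t := z.val with ht
    rcases le_or_gt t a with hta | hta
    · -- z to the left
      apply le_trans _ (le_max_right _ _)
      rw [MyC.dist_eq]
      have h1 : |t - (a + W)| = a + W - t := by
        rw [abs_of_nonpos (by linarith)]; ring
      rw [h1]
      have h2 : 0 ≤ |η| * |gF pres t - gF pres (a + W)| :=
        mul_nonneg (abs_nonneg _) (abs_nonneg _)
      nlinarith
    rcases le_or_gt (a + W) t with htb | htb
    · -- z to the right
      apply le_trans _ (le_max_left _ _)
      rw [MyC.dist_eq]
      have h1 : |a - t| = t - a := by
        rw [abs_of_nonpos (by linarith)]; ring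
      rw [h1]
      have h2 : 0 ≤ |η| * |gF pres a - gF pres t| :=
        mul_nonneg (abs_nonneg _) (abs_nonneg _)
      nlinarith
    · -- z inside the tent
      have hvt : ∀ m' ≠ n, tentF pres m' t = 0 := by
        intro m' hne
        rcases lt_or_gt_of_ne hne with h | h
        · apply tent_vanish_right
          have h1 : qq (m'+1) ≤ qq n := qq_mono h
          rw [qq_succ] at h1
          have := ww_pos m'
          rw [← ha] at h1
          linarith
        · apply tent_vanish_left
          have h1 : qq (n+1) ≤ qq m' := qq_mono h
          rw [qq_succ, ← ha, ← hW] at h1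
          linarith
      have hgt : gF pres t = min (min (t - a) (W / 4)) (a + W - t) := by
        rw [gF_eval (m := n) hvt]
        unfold tentF
        rw [if_pos hn, ← ha, ← hW]
        exact max_eq_right (le_min (le_min (by linarith) (by linarith)) (by linarith))
      set τ := min (min (t - a) (W / 4)) (a + W - t) with hτdef
      have hτ0 : 0 ≤ τ := le_min (le_min (by linarith) (by linarith)) (by linarith)
      have hdxz : dist (⟨a, ⟨ha0, by linarith⟩⟩ : MyC (gF pres) η) z = (t - a) + η * τ := by
        rw [MyC.dist_eq]
        simp only [hgx, hgt, ← ht]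
        rw [show a - t = -(t - a) by ring, abs_neg, abs_of_nonneg (by linarith),
          show (0:ℝ) - τ = -τ by ring, abs_neg, abs_of_nonneg hτ0, habs]
      have hdzy : dist z (⟨a + W, ⟨by linarith, haW⟩⟩ : MyC (gF pres) η)
          = (a + W - t) + η * τ := by
        rw [MyC.dist_eq]
        simp only [hgy, hgt, ← ht]
        rw [abs_of_nonpos (by linarith : t - (a + W) ≤ 0),
          show τ - 0 = τ by ring, abs_of_nonneg hτ0, habs]
        ring
      rw [hdxz, hdzy]
      by_cases hτbig : W / 8 ≤ τ
      · calc (1/2 + η/8) * W ≤ (((t - a) + η * τ) + ((a + W - t) + η * τ)) / 2 := by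
              nlinarith
          _ ≤ max ((t - a) + η * τ) ((a + W - t) + η * τ) := avg_le_max _ _
      · push_neg at hτbig
        rw [hτdef, min_lt_iff, min_lt_iff] at hτbig
        rcases hτbig with (h | h) | h
        · -- t close to a : right distance is large
          apply le_trans _ (le_max_right _ _)
          nlinarith
        · linarith
        · -- t close to a+W : left distance is large
          apply le_trans _ (le_max_left _ _)
          nlinarith

set_option maxHeartbeats 2000000 in
lemma H2core (pres : ℕ → Prop) [DecidablePred pres] {η : ℝ} (hη0 : 0 ≤ η) (hη : η ≤ 1/2)
    {n : ℕ} (hn : ¬ pres n) (x y : MyC (gF pres) η) (hxy : x.val ≤ y.val)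
    (hd1 : 98/100 * ww n ≤ dist x y) (hd2 : dist x y ≤ 102/100 * ww n) :
    ∃ z, max (dist x z) (dist z y) ≤ (1/2 + η/100) * dist x y := by
  have habs : |η| = η := abs_of_nonneg hη0
  set u := x.val with hu
  set v := y.val with hv
  set W := ww n with hW
  have hW0 : 0 < W := ww_pos n
  set d := dist x y with hd
  have hdeq : d = (v - u) + η * |gF pres u - gF pres v| := by
    rw [hd, MyC.dist_eq, ← hu, ← hv, habs, abs_of_nonpos (by linarith : u - v ≤ 0)]
    ring_nf
  have hglip : |gF pres u - gF pres v| ≤ v - u := by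
    have := gF_lip (pres := pres) u v
    rwa [abs_of_nonpos (by linarith : u - v ≤ 0), neg_sub] at this
  have habsge : 0 ≤ |gF pres u - gF pres v| := abs_nonneg _
  have hvu1 : v - u ≤ d := by rw [hdeq]; nlinarith
  have hvu2 : d ≤ (1 + η) * (v - u) := by rw [hdeq]; nlinarith
  have hvu3 : 65/100 * W ≤ v - u := by nlinarith
  have hvu4 : v - u ≤ 102/100 * W := by linarith
  have hd0 : 0 < d := by linarith
  have hu0 : 0 ≤ u := x.property.1
  have hv1 : v ≤ 1 := y.property.2
  by_cases hB : ∃ m, m < n ∧ qq m < v ∧ u < qq m + ww m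
  · -- Case B : near one big tent, on which gF is monotone on [u,v]
    obtain ⟨m, hmn, hq1, hq2⟩ := hB
    have hWm : 100 * W ≤ ww m := ww_big hmn
    have hgev : ∀ z, u ≤ z → z ≤ v → gF pres z = tentF pres m z := by
      intro z hz1 hz2
      apply gF_eval
      intro m' hne
      rcases lt_or_gt_of_ne hne with h | h
      · apply tent_vanish_right
        have h1 : qq (m'+1) ≤ qq m := qq_mono h
        rw [qq_succ] at h1
        have hbig' : 100 * W ≤ ww m' := ww_big (lt_trans h hmn)
        linarith
      · apply tent_vanish_left
        have h1 : qq (m+1) ≤ qq m' := qq_mono h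
        rw [qq_succ] at h1
        linarith
    have hmem : ∀ z : ℝ, u ≤ z → z ≤ v → z ∈ Set.Icc (0:ℝ) 1 :=
      fun z h1 h2 => ⟨by linarith, by linarith⟩
    by_cases hpos : v ≤ qq m + ww m - ww m / 4
    · -- monotone case
      have hmono : ∀ z₁ z₂, u ≤ z₁ → z₁ ≤ z₂ → z₂ ≤ v → gF pres z₁ ≤ gF pres z₂ := by
        intro z₁ z₂ h1 h2 h3
        rw [hgev z₁ h1 (le_trans h2 h3), hgev z₂ (le_trans h1 h2) h3]
        exact tent_mono h2 (by linarith)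
      obtain ⟨z, hz1, hz2, he1, he2⟩ := mono_mid (gF pres) gF_cont η hη0 u v hxy hmono
      have hDd : (v - u) + η * (gF pres v - gF pres u) = d := by
        rw [hdeq, abs_of_nonpos (by linarith [hmono u v le_rfl hxy le_rfl])]
        ring
      refine ⟨⟨z, hmem z hz1 hz2⟩, ?_⟩
      have hdxz : dist x ⟨z, hmem z hz1 hz2⟩ = (z - u) + η * (gF pres z - gF pres u) := by
        rw [MyC.dist_eq, habs, ← hu]
        rw [abs_of_nonpos (by linarith : u - z ≤ 0),
          abs_of_nonpos (by linarith [hmono u z le_rfl hz1 hz2] : gF pres u - gF pres z ≤ 0)]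
        ring
      have hdzy : dist (⟨z, hmem z hz1 hz2⟩ : MyC (gF pres) η) y
          = (v - z) + η * (gF pres v - gF pres z) := by
        rw [MyC.dist_eq, habs, ← hv]
        rw [abs_of_nonpos (by linarith : z - v ≤ 0),
          abs_of_nonpos (by linarith [hmono z v hz1 hz2 le_rfl] : gF pres z - gF pres v ≤ 0)]
        ring
      rw [hdxz, hdzy, he1, he2, hDd]
      apply max_le <;> nlinarith
    · -- antitone case
      push_neg at hpos
      have hu' : qq m + ww m / 4 ≤ u := by linarith
      have hanti : ∀ z₁ z₂, u ≤ z₁ → z₁ ≤ z₂ → z₂ ≤ v →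
          (fun t => -(gF pres t)) z₁ ≤ (fun t => -(gF pres t)) z₂ := by
        intro z₁ z₂ h1 h2 h3
        simp only [neg_le_neg_iff]
        rw [hgev z₁ h1 (le_trans h2 h3), hgev z₂ (le_trans h1 h2) h3]
        exact tent_anti h2 (by linarith)
      obtain ⟨z, hz1, hz2, he1, he2⟩ :=
        mono_mid (fun t => -(gF pres t)) gF_cont.neg η hη0 u v hxy hanti
      simp only [neg_sub_neg] at he1 he2
      have hgzu : gF pres z ≤ gF pres u := by
        have := hanti u z le_rfl hz1 hz2; simpa using this
      have hgvz : gF pres v ≤ gF pres z := by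
        have := hanti z v hz1 hz2 le_rfl; simpa using this
      have hDd : (v - u) + η * (gF pres u - gF pres v) = d := by
        rw [hdeq, abs_of_nonneg (by linarith : 0 ≤ gF pres u - gF pres v)]
      refine ⟨⟨z, hmem z hz1 hz2⟩, ?_⟩
      have hdxz : dist x ⟨z, hmem z hz1 hz2⟩ = (z - u) + η * (gF pres u - gF pres z) := by
        rw [MyC.dist_eq, habs, ← hu]
        rw [abs_of_nonpos (by linarith : u - z ≤ 0),
          abs_of_nonneg (by linarith : 0 ≤ gF pres u - gF pres z)]
        ring
      have hdzy : dist (⟨z, hmem z hz1 hz2⟩ : MyC (gF pres) η) y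
          = (v - z) + η * (gF pres z - gF pres v) := by
        rw [MyC.dist_eq, habs, ← hv]
        rw [abs_of_nonpos (by linarith : z - v ≤ 0),
          abs_of_nonneg (by linarith : 0 ≤ gF pres z - gF pres v)]
        ring
      rw [hdxz, hdzy, he1, he2, hDd]
      apply max_le <;> nlinarith
  · -- Case A : only small tents around; midpoint works
    push_neg at hB
    have hvan : ∀ z, u ≤ z → z ≤ v → ∀ m', m' ≤ n → tentF pres m' z = 0 := by
      intro z hz1 hz2 m' hm'
      rcases eq_or_lt_of_le hm' with rfl | hm'
      · simp [tentF, hn]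
      · by_contra h0
        obtain ⟨hp1, hp2⟩ := tent_ne_zero h0
        exact absurd (hB m' hm' (lt_of_lt_of_le hp1 hz2)) (by push_neg; linarith)
    have hgb : ∀ z, u ≤ z → z ≤ v → gF pres z ≤ W / 400 := by
      intro z hz1 hz2
      apply ciSup_le
      intro m'
      rcases le_or_gt m' n with h | h
      · rw [hvan z hz1 hz2 m' h]; positivity
      · calc tentF pres m' z ≤ ww m' / 4 := tent_le m' z
          _ ≤ ww (n+1) / 4 := by linarith [ww_mono h]
          _ = W / 400 := by rw [ww_succ, ← hW]; ring
    have hmid : (u + v) / 2 ∈ Set.Icc (0:ℝ) 1 := ⟨by linarith, by linarith⟩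
    refine ⟨⟨(u + v) / 2, hmid⟩, ?_⟩
    have hgu := hgb u le_rfl hxy
    have hgv := hgb v hxy le_rfl
    have hgm := hgb ((u + v) / 2) (by linarith) (by linarith)
    have hgu0 := gF_nonneg (pres := pres) u
    have hgv0 := gF_nonneg (pres := pres) v
    have hgm0 := gF_nonneg (pres := pres) ((u + v) / 2)
    have hdxz : dist x ⟨(u + v) / 2, hmid⟩ ≤ (v - u) / 2 + η * (W / 400) := by
      rw [MyC.dist_eq, habs, ← hu]
      have h1 : |u - (u + v) / 2| = (v - u) / 2 := by
        rw [abs_of_nonpos (by linarith)]; ring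
      have h2 : |gF pres u - gF pres ((u + v) / 2)| ≤ W / 400 :=
        abs_le.mpr ⟨by linarith, by linarith⟩
      rw [h1]
      nlinarith
    have hdzy : dist (⟨(u + v) / 2, hmid⟩ : MyC (gF pres) η) y
        ≤ (v - u) / 2 + η * (W / 400) := by
      rw [MyC.dist_eq, habs, ← hv]
      have h1 : |(u + v) / 2 - v| = (v - u) / 2 := by
        rw [abs_of_nonpos (by linarith)]; ring
      have h2 : |gF pres ((u + v) / 2) - gF pres v| ≤ W / 400 :=
        abs_le.mpr ⟨by linarith, by linarith⟩
      rw [h1]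
      nlinarith
    apply max_le <;> nlinarith

lemma H2 (pres : ℕ → Prop) [DecidablePred pres] {η : ℝ} (hη0 : 0 ≤ η) (hη : η ≤ 1/2)
    {n : ℕ} (hn : ¬ pres n) (x y : MyC (gF pres) η)
    (hd1 : 98/100 * ww n ≤ dist x y) (hd2 : dist x y ≤ 102/100 * ww n) :
    ∃ z, max (dist x z) (dist z y) ≤ (1/2 + η/100) * dist x y := by
  rcases le_total x.val y.val with h | h
  · exact H2core pres hη0 hη hn x y h hd1 hd2
  · obtain ⟨z, hz⟩ := H2core pres hη0 hη hn y x h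
      (by rwa [dist_comm]) (by rwa [dist_comm])
    refine ⟨z, ?_⟩
    rw [dist_comm x z, dist_comm z y, max_comm, dist_comm x y]
    exact hz


set_option maxHeartbeats 2000000 in
/-- For every `δ > 0`, the ball of radius `δ` around `[0,1]` in the Lipschitz distance is
not separable: no countable family in it is `d_L`-dense. -/
theorem ball_not_separable (δ : ℝ) (hδ : 0 < δ) :
    ¬ ∃ D : ℕ → CptMet,
      (∀ n, lipDist ↥(Set.Icc (0:ℝ) 1) (D n).carrier < ENNReal.ofReal δ) ∧
      (∀ Y : CptMet, lipDist ↥(Set.Icc (0:ℝ) 1) Y.carrier < ENNReal.ofReal δ →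
        ∀ ε : ℝ≥0∞, 0 < ε → ∃ n, lipDist Y.carrier (D n).carrier < ε) := by
  rintro ⟨D, hball, hdense⟩
  classical
  -- choose the smallness parameter η
  set δ' := min δ 1 with hδ'def
  have hδ'0 : 0 < δ' := lt_min hδ one_pos
  have hδ'δ : δ' ≤ δ := min_le_left _ _
  set η := min (1/2) ((Real.exp δ' - 1)/2) with hηdef
  have hexp : 1 < Real.exp δ' := by
    rw [← Real.exp_zero]; exact Real.exp_lt_exp.mpr hδ'0
  have hη0 : 0 < η := lt_min (by norm_num) (by linarith)
  have hη12 : η ≤ 1/2 := min_le_left _ _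
  have hlog : Real.log (1 + η) < δ := by
    have h1 : η ≤ (Real.exp δ' - 1)/2 := min_le_right _ _
    have h2 : 1 + η < Real.exp δ' := by linarith
    have h3 : Real.log (1 + η) < Real.log (Real.exp δ') :=
      Real.log_lt_log (by linarith) h2
    rw [Real.log_exp] at h3
    linarith
  set c := η / 1000 with hcdef
  have hc0 : 0 < c := by rw [hcdef]; linarith
  have hE1 : 1 ≤ Real.exp c := Real.one_le_exp hc0.le
  have hE2 : Real.exp c ≤ 1 + η/400 := by
    have h1 : -c + 1 ≤ Real.exp (-c) := Real.add_one_le_exp (-c)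
    have h2 : Real.exp (-c) * Real.exp c = 1 := by
      rw [← Real.exp_add]; simp
    have h3 : (1 - c) * Real.exp c ≤ 1 := by nlinarith [Real.exp_pos c]
    have hc12 : c ≤ 1/2000 := by rw [hcdef]; linarith
    nlinarith [Real.exp_pos c, hc0]
  -- the defect predicate for the spaces D n
  set b : ℕ → Prop := fun n => ∃ p q : (D n).carrier,
    ((1 - η/100) * ww n ≤ dist p q ∧ dist p q ≤ (1 + η/100) * ww n) ∧
    ∀ z, (1/2 + η/10) * dist p q ≤ max (dist p z) (dist z q) with hbdef
  set pres : ℕ → Prop := fun n => ¬ b n with hpresdef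
  haveI : DecidablePred pres := Classical.decPred pres
  have hglip : ∀ x y : ℝ, |gF pres x - gF pres y| ≤ |x - y| := gF_lip
  haveI hcptY : CompactSpace (MyC (gF pres) η) := MyC.compactSpace hglip
  set Ycm : CptMet := ⟨MyC (gF pres) η⟩ with hYdef
  have hmem : lipDist ↥(Set.Icc (0:ℝ) 1) Ycm.carrier < ENNReal.ofReal δ := by
    have h1 := MyC.ball_mem (G := gF pres) (η := η) hη0.le hglip
      (by rw [gF_one, gF_zero])
    exact lt_of_le_of_lt h1 ((ENNReal.ofReal_lt_ofReal_iff hδ).mpr hlog)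
  obtain ⟨n, hn⟩ := hdense Ycm hmem (ENNReal.ofReal c) (ENNReal.ofReal_pos.mpr hc0)
  obtain ⟨f, hbi, hcost⟩ := exists_equiv_of_lipDist_lt hc0 hn
  haveI : Nontrivial (MyC (gF pres) η) := MyC.instNontrivial (gF pres) η
  obtain ⟨hf1, hf2⟩ := biLip_bounds f hbi hcost
  have hWn : 0 < ww n := ww_pos n
  have hEsq : Real.exp c * Real.exp c ≤ 1 + η/150 := by nlinarith
  by_cases hbn : b n
  · -- D n has a defective pair near scale ww n; pull it back and contradict H2
    have hnp : ¬ pres n := fun hp => hp hbn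
    obtain ⟨p, q, ⟨hw1, hw2⟩, hdef⟩ := hbn
    have hdpq0 : (0:ℝ) ≤ dist p q := dist_nonneg
    set xx := f.symm p with hxxdef
    set yy := f.symm q with hyydef
    have hfp : f xx = p := f.apply_symm_apply p
    have hfq : f yy = q := f.apply_symm_apply q
    have hdxy0 : (0:ℝ) ≤ dist xx yy := dist_nonneg
    have h1 : dist xx yy ≤ Real.exp c * dist p q := by
      have := hf2 xx yy; rwa [hfp, hfq] at this
    have h2 : dist p q ≤ Real.exp c * dist xx yy := by
      have := hf1 xx yy; rwa [hfp, hfq] at this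
    have hwin1 : 98/100 * ww n ≤ dist xx yy := by nlinarith
    have hwin2 : dist xx yy ≤ 102/100 * ww n := by nlinarith
    have hdefY : ∀ z : MyC (gF pres) η,
        (1/2 + η/20) * dist xx yy ≤ max (dist xx z) (dist z yy) := by
      intro z
      have h3 := hdef (f z)
      have h4 : dist p (f z) ≤ Real.exp c * dist xx z := by
        have := hf1 xx z; rwa [hfp] at this
      have h5 : dist (f z) q ≤ Real.exp c * dist z yy := by
        have := hf1 z yy; rwa [hfq] at this
      set M := max (dist xx z) (dist z yy) with hMdef
      have hM0 : (0:ℝ) ≤ M := le_trans dist_nonneg (le_max_left _ _)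
      have h36 : (1/2 + η/10) * dist p q ≤ Real.exp c * M := by
        apply le_trans h3
        apply max_le
        · exact le_trans h4 (mul_le_mul_of_nonneg_left (le_max_left _ _) (by linarith))
        · exact le_trans h5 (mul_le_mul_of_nonneg_left (le_max_right _ _) (by linarith))
      have s1 : (1/2 + η/10) * dist xx yy ≤ (Real.exp c * Real.exp c) * M := by
        calc (1/2 + η/10) * dist xx yy
            ≤ (1/2 + η/10) * (Real.exp c * dist p q) :=
              mul_le_mul_of_nonneg_left h1 (by linarith)
          _ = Real.exp c * ((1/2 + η/10) * dist p q) := by ring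
          _ ≤ Real.exp c * (Real.exp c * M) :=
              mul_le_mul_of_nonneg_left h36 (by linarith)
          _ = (Real.exp c * Real.exp c) * M := by ring
      have s3 : (1/2 + η/20) * (1 + η/150) ≤ (1/2 + η/10) := by nlinarith
      have s4 : (1 + η/150) * ((1/2 + η/20) * dist xx yy) ≤ (1 + η/150) * M := by
        nlinarith [mul_le_mul_of_nonneg_right s3 hdxy0,
          mul_le_mul_of_nonneg_right hEsq hM0]
      exact le_of_mul_le_mul_left s4 (by linarith)
    obtain ⟨z0, hz0⟩ := H2 pres hη0.le hη12 hnp xx yy hwin1 hwin2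
    have hcontra := hdefY z0
    nlinarith
  · -- D n has no defective pair near scale ww n; push the tent pair forward
    have hpn : pres n := hbn
    obtain ⟨xx, yy, hdxy, hdef⟩ := H1 pres hη0.le (by linarith) hpn
    apply hbn
    have h7 : dist (f xx) (f yy) ≤ Real.exp c * ww n := by
      have := hf1 xx yy; rwa [hdxy] at this
    have h8 : ww n ≤ Real.exp c * dist (f xx) (f yy) := by
      have := hf2 xx yy; rwa [hdxy] at this
    have hdf0 : (0:ℝ) ≤ dist (f xx) (f yy) := dist_nonneg
    refine ⟨f xx, f yy, ⟨by nlinarith, by nlinarith⟩, ?_⟩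
    intro z
    have h3 := hdef (f.symm z)
    have h4 : dist xx (f.symm z) ≤ Real.exp c * dist (f xx) z := by
      have := hf2 xx (f.symm z); rwa [f.apply_symm_apply] at this
    have h5 : dist (f.symm z) yy ≤ Real.exp c * dist z (f yy) := by
      have := hf2 (f.symm z) yy; rwa [f.apply_symm_apply] at this
    set M := max (dist (f xx) z) (dist z (f yy)) with hMdef
    have hM0 : (0:ℝ) ≤ M := le_trans dist_nonneg (le_max_left _ _)
    have h36 : (1/2 + η/8) * ww n ≤ Real.exp c * M := by
      apply le_trans h3
      apply max_le
      · exact le_trans h4 (mul_le_mul_of_nonneg_left (le_max_left _ _) (by linarith))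
      · exact le_trans h5 (mul_le_mul_of_nonneg_left (le_max_right _ _) (by linarith))
    have s3 : (1 + η/150) * (1/2 + η/10) ≤ (1/2 + η/8) := by nlinarith
    have s4 : Real.exp c * ((1/2 + η/10) * dist (f xx) (f yy)) ≤ Real.exp c * M := by
      have t1 : (1/2 + η/10) * dist (f xx) (f yy)
          ≤ (1/2 + η/10) * (Real.exp c * ww n) :=
        mul_le_mul_of_nonneg_left h7 (by linarith)
      have t2 : Real.exp c * ((1/2 + η/10) * (Real.exp c * ww n))
          = (Real.exp c * Real.exp c) * ((1/2 + η/10) * ww n) := by ring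
      have t3 : (Real.exp c * Real.exp c) * ((1/2 + η/10) * ww n)
          ≤ (1 + η/150) * ((1/2 + η/10) * ww n) := by
        apply mul_le_mul_of_nonneg_right hEsq
        nlinarith
      have t4 : (1 + η/150) * ((1/2 + η/10) * ww n) ≤ (1/2 + η/8) * ww n := by
        nlinarith [mul_le_mul_of_nonneg_right s3 hWn.le]
      calc Real.exp c * ((1/2 + η/10) * dist (f xx) (f yy))
          ≤ Real.exp c * ((1/2 + η/10) * (Real.exp c * ww n)) :=
            mul_le_mul_of_nonneg_left t1 (by linarith)
        _ = (Real.exp c * Real.exp c) * ((1/2 + η/10) * ww n) := t2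
        _ ≤ (1 + η/150) * ((1/2 + η/10) * ww n) := t3
        _ ≤ (1/2 + η/8) * ww n := t4
        _ ≤ Real.exp c * M := h36
    exact le_of_mul_le_mul_left s4 (by linarith)
end
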